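/- arXiv:2502.02393 — 5 statements merged into one kernel-verified Lean document; each statement's English description precedes it below -/
import Mathlib

section
/- For all L, H ∈ ℕ, every finite alphabet Σ, and every C ∈ (0,1), there exist c, K ∈ ℕ (depending only on L, H, |Σ| and C) such that: for every UHAT transformer T over Σ with L layers and H heads per layer and every input length N > K, there is a map ρ : {1,…,N} → Σ ∪ {*} with |{i : ρ(i) = *}| ≥ C·N such that for every position i ∈ {1,…,N} and layer l ∈ {1,…,L} there is a set S ⊆ {1,…,N} with |S| ≤ c such that, on inputs x ∈ Σ^N consistent with ρ, the activation y_i^{(l)} of T is a function only of the coordinates (x_j)_{j ∈ S}. -/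
open Matrix Filter

/-- A unique-hard-attention (UHAT) transformer over vocabulary type `V`. -/
structure UHAT (V : Type*) where
  /-- width -/
  d : ℕ
  /-- maximal context size -/
  nmax : ℕ
  /-- number of layers -/
  L : ℕ
  /-- number of heads per layer -/
  H : ℕ
  /-- the (finite) vocabulary -/
  vocab : Finset V
  /-- token embeddings -/
  embed : V → Fin d → ℝ
  /-- positional encodings -/
  pos : ℕ → Fin d → ℝ
  /-- key matrices (layer, head) -/
  Kmat : ℕ → ℕ → Matrix (Fin d) (Fin d) ℝ
  /-- query matrices (layer, head) -/
  Qmat : ℕ → ℕ → Matrix (Fin d) (Fin d) ℝ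
  /-- value matrices (layer, head) -/
  Vmat : ℕ → ℕ → Matrix (Fin d) (Fin d) ℝ
  /-- (arbitrary) MLP maps, one for each layer -/
  mlp : ℕ → (Fin d → ℝ) → Fin d → ℝ
  /-- output matrix, one row per vocabulary item -/
  outm : V → Fin d → ℝ

open Classical in
/-- The smallest `j ≤ i` maximizing `f j` (unique hard attention with leftmost
tie-breaking and causal masking). -/
noncomputable def argmaxLeft {n : ℕ} (i : Fin n) (f : Fin n → ℝ) : Fin n :=
  ((Finset.Iic i).filter fun j => ∀ j' ∈ Finset.Iic i, f j' ≤ f j).min'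
    (by
      obtain ⟨b, hb, hmax⟩ :=
        (Finset.Iic i).exists_max_image f ⟨i, Finset.mem_Iic.mpr le_rfl⟩
      exact ⟨b, Finset.mem_filter.mpr ⟨hb, hmax⟩⟩)

/-- Activations `y_i^{(k)}` of a UHAT transformer on the input string `w`. -/
noncomputable def UHAT.act {V : Type*} (T : UHAT V) {n : ℕ} (w : Fin n → V) :
    ℕ → Fin n → Fin T.d → ℝ
  | 0, i => fun t => T.embed (w i) t + T.pos i.val t
  | k + 1, i =>
      T.mlp k (T.act w k i +
        ∑ h ∈ Finset.range T.H,
          (T.Vmat k h).mulVec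
            (T.act w k (argmaxLeft i fun j =>
              (T.Kmat k h).mulVec (T.act w k j) ⬝ᵥ (T.Qmat k h).mulVec (T.act w k i))))

/-- The output of the transformer at (0-indexed) position `i` of the string `w`:
a score for each vocabulary item. -/
noncomputable def UHAT.output {V : Type*} (T : UHAT V) (w : List V) (i : ℕ) : V → ℝ :=
  if h : i < w.length then fun v => T.outm v ⬝ᵥ T.act w.get T.L ⟨i, h⟩ else 0

open Classical in
/-- One-hot vector over the vocabulary. -/
noncomputable def oneHot {V : Type*} (v : V) : V → ℝ := fun u => if u = v then 1 else 0

/-- `T` computes the chain of thought `y` on input `w`: all symbols of `w ++ y` are in the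
vocabulary, the string fits into the context window, and for each `i = 1, …, |y|`, the
output at (1-indexed) position `|w| + i - 1` is the one-hot vector of `yᵢ`. -/
def UHAT.Computes {V : Type*} (T : UHAT V) (w y : List V) : Prop :=
  (∀ v ∈ w ++ y, v ∈ T.vocab) ∧ (w ++ y).length ≤ T.nmax ∧
    ∀ i : Fin y.length, T.output (w ++ y) (w.length + i.val - 1) = oneHot (y.get i)

/-- The chain of thought `g` (with input symbols included into the CoT alphabet via `ι`)
is expressible in UHAT: there are uniform bounds `L`, `H` on layers and heads such that for
every total length `n` some UHAT transformer computes `g` on all inputs of total length `n`. -/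
def ExpressibleUHAT {S V : Type*} (ι : S → V) (g : List S → List V) : Prop :=
  ∃ L H : ℕ, ∀ n : ℕ, ∃ T : UHAT V, T.L ≤ L ∧ T.H ≤ H ∧
    ∀ x : List S, (x.map ι ++ g x).length = n → T.Computes (x.map ι) (g x)

/-- Worst-case CoT length over inputs of length `N`. -/
noncomputable def maxCoTLen {S V : Type*} [Fintype S] (g : List S → List V) (N : ℕ) : ℕ :=
  Finset.univ.sup fun x : Fin N → S => (g (List.ofFn x)).length

/-- `x` is consistent with the restriction `ρ` (`none` plays the role of `*`). -/
def ConsistentWith {S : Type*} {N : ℕ} (ρ : Fin N → Option S) (x : Fin N → S) : Prop :=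
  ∀ i : Fin N, ∀ s : S, ρ i = some s → x i = s

/-- Parity of a bit string: `true` iff the number of `1`s is odd. -/
def parity (x : List Bool) : Bool := decide (x.count true % 2 = 1)

namespace RLem
open Finset
attribute [local instance] Classical.propDecidable

variable {S : Type*} {N : ℕ}

/-- `ρ'` extends the restriction `ρ`. -/
def Ext (ρ ρ' : Fin N → Option S) : Prop := ∀ u s, ρ u = some s → ρ' u = some s

theorem Ext.refl (ρ : Fin N → Option S) : Ext ρ ρ := fun _ _ h => h

theorem Ext.trans {ρ₁ ρ₂ ρ₃ : Fin N → Option S} (h1 : Ext ρ₁ ρ₂) (h2 : Ext ρ₂ ρ₃) :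
    Ext ρ₁ ρ₃ := fun u s h => h2 u s (h1 u s h)

theorem cons_anti {ρ ρ' : Fin N → Option S} (h : Ext ρ ρ') {x : Fin N → S}
    (hx : ConsistentWith ρ' x) : ConsistentWith ρ x := fun u s hu => hx u s (h u s hu)

theorem ext_isSome {ρ ρ' : Fin N → Option S} (h : Ext ρ ρ') {u : Fin N}
    (hu : (ρ u).isSome) : (ρ' u).isSome := by
  obtain ⟨s, hs⟩ := Option.isSome_iff_exists.mp hu
  exact Option.isSome_iff_exists.mpr ⟨s, h u s hs⟩

noncomputable def cost (ρ : Fin N → Option S) : ℕ :=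
  (Finset.univ.filter fun u => (ρ u).isSome).card

noncomputable def extendBy (ρ : Fin N → Option S) (A : Finset (Fin N)) (x : Fin N → S) :
    Fin N → Option S :=
  fun u => if (ρ u).isSome then ρ u else if u ∈ A then some (x u) else none

theorem ext_extendBy (ρ : Fin N → Option S) (A : Finset (Fin N)) (x : Fin N → S) :
    Ext ρ (extendBy ρ A x) := by
  intro u s h
  simp [extendBy, h]

theorem extendBy_isSome_of_mem (ρ : Fin N → Option S) {A : Finset (Fin N)} (x : Fin N → S)
    {u : Fin N} (hu : u ∈ A) : ((extendBy ρ A x) u).isSome := by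
  unfold extendBy
  by_cases h : (ρ u).isSome <;> simp [h, hu]

theorem consistent_extendBy {ρ : Fin N → Option S} {A : Finset (Fin N)} {x y : Fin N → S}
    (hy : ConsistentWith (extendBy ρ A x) y) {u : Fin N} (hu : u ∈ A)
    (hfree : ¬ (ρ u).isSome) : y u = x u := by
  apply hy u
  simp [extendBy, hfree, hu]

theorem cost_extendBy (ρ : Fin N → Option S) (A : Finset (Fin N)) (x : Fin N → S) :
    cost (extendBy ρ A x) ≤ cost ρ + A.card := by
  unfold cost
  calc (Finset.univ.filter fun u => ((extendBy ρ A x) u).isSome).card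
      ≤ ((Finset.univ.filter fun u => (ρ u).isSome) ∪ A).card := by
        apply Finset.card_le_card
        intro u hu
        simp only [Finset.mem_filter, Finset.mem_univ, true_and] at hu
        simp only [Finset.mem_union, Finset.mem_filter, Finset.mem_univ, true_and]
        by_cases h : (ρ u).isSome
        · exact Or.inl h
        · right
          by_contra hA
          simp [extendBy, h, hA] at hu
    _ ≤ _ := Finset.card_union_le _ _

theorem card_none_eq (ρ : Fin N → Option S) :
    (Finset.univ.filter fun u => (ρ u).isNone).card = N - cost ρ := by
  have h : (Finset.univ.filter fun u => (ρ u).isNone) =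
      (Finset.univ.filter fun u => (ρ u).isSome)ᶜ := by
    ext u
    simp only [Finset.mem_filter, Finset.mem_univ, true_and, Finset.mem_compl]
    cases ρ u <;> simp
  rw [h, Finset.card_compl, cost]
  simp

/-- Key lemma about leftmost argmax: if scores `f` and `g` agree on `E`, some `h₀ ∈ E`
with `h₀ ≤ i` dominates everything outside `E` (with ties only to the right of `h₀`),
then the argmaxes agree and lie in `E`. -/
theorem argmax_eq {n : ℕ} (i : Fin n) (f g : Fin n → ℝ) (E : Finset (Fin n)) (h₀ : Fin n)
    (hh₀E : h₀ ∈ E) (hh₀i : h₀ ≤ i)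
    (hEeq : ∀ j ∈ E, f j = g j)
    (hR : ∀ j : Fin n, j ≤ i → j ∉ E →
      (f j ≤ f h₀ ∧ g j ≤ g h₀ ∧ (h₀ < j ∨ (f j < f h₀ ∧ g j < g h₀)))) :
    argmaxLeft i f = argmaxLeft i g ∧ argmaxLeft i f ∈ E := by
  classical
  have key : ∀ (f g : Fin n → ℝ),
      (∀ j ∈ E, f j = g j) →
      (∀ j : Fin n, j ≤ i → j ∉ E →
        (f j ≤ f h₀ ∧ g j ≤ g h₀ ∧ (h₀ < j ∨ (f j < f h₀ ∧ g j < g h₀)))) →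
      argmaxLeft i f ∈ E ∧
        ∀ j' ∈ Finset.Iic i, g j' ≤ g (argmaxLeft i f) := by
    intro f g hEeq hR
    set Pf := ((Finset.Iic i).filter fun j => ∀ j' ∈ Finset.Iic i, f j' ≤ f j) with hPfdef
    have hPfne : Pf.Nonempty := by
      obtain ⟨b, hb, hmax⟩ :=
        (Finset.Iic i).exists_max_image f ⟨i, Finset.mem_Iic.mpr le_rfl⟩
      exact ⟨b, Finset.mem_filter.mpr ⟨hb, hmax⟩⟩
    have hMf : argmaxLeft i f ∈ Pf := by
      rw [argmaxLeft]
      exact Finset.min'_mem _ _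
    set Mf := argmaxLeft i f with hMfdef
    simp only [hPfdef, Finset.mem_filter, Finset.mem_Iic] at hMf
    obtain ⟨hMfle, hMfmax⟩ := hMf
    have hMfE : Mf ∈ E := by
      by_contra hE
      obtain ⟨h1, h2, h3⟩ := hR Mf hMfle hE
      have hmax0 : f h₀ ≤ f Mf := hMfmax h₀ hh₀i
      have heq : f Mf = f h₀ := le_antisymm h1 hmax0
      rcases h3 with h3 | h3
      · have hh₀Pf : h₀ ∈ Pf := by
          refine Finset.mem_filter.mpr ⟨Finset.mem_Iic.mpr hh₀i, ?_⟩
          intro j' hj'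
          calc f j' ≤ f Mf := hMfmax j' (Finset.mem_Iic.mp hj')
            _ = f h₀ := heq
        have : Mf ≤ h₀ := by
          rw [hMfdef, argmaxLeft]
          exact Finset.min'_le _ _ hh₀Pf
        exact absurd (lt_of_le_of_lt this h3) (lt_irrefl Mf)
      · linarith
    refine ⟨hMfE, ?_⟩
    intro j' hj'
    rw [Finset.mem_Iic] at hj'
    by_cases hjE : j' ∈ E
    · rw [← hEeq _ hjE, ← hEeq _ hMfE]
      exact hMfmax j' hj'
    · obtain ⟨h1, h2, h3⟩ := hR j' hj' hjE
      calc g j' ≤ g h₀ := h2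
        _ = f h₀ := (hEeq _ hh₀E).symm
        _ ≤ f Mf := hMfmax h₀ hh₀i
        _ = g Mf := hEeq _ hMfE
  have hR' : ∀ j : Fin n, j ≤ i → j ∉ E →
      (g j ≤ g h₀ ∧ f j ≤ f h₀ ∧ (h₀ < j ∨ (g j < g h₀ ∧ f j < f h₀))) := by
    intro j hj hjE
    obtain ⟨h1, h2, h3⟩ := hR j hj hjE
    exact ⟨h2, h1, h3.imp id (fun hh => ⟨hh.2, hh.1⟩)⟩
  have hEeq' : ∀ j ∈ E, g j = f j := fun j hj => (hEeq j hj).symm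
  obtain ⟨hfE, hfg⟩ := key f g hEeq hR
  obtain ⟨hgE, hgf⟩ := key g f hEeq' hR'
  have h1 : argmaxLeft i g ≤ argmaxLeft i f := by
    conv_lhs => rw [argmaxLeft]
    apply Finset.min'_le
    refine Finset.mem_filter.mpr ⟨?_, hfg⟩
    rw [argmaxLeft]
    exact Finset.filter_subset _ _ (Finset.min'_mem _ _)
  have h2 : argmaxLeft i f ≤ argmaxLeft i g := by
    conv_lhs => rw [argmaxLeft]
    apply Finset.min'_le
    refine Finset.mem_filter.mpr ⟨?_, hgf⟩
    rw [argmaxLeft]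
    exact Finset.filter_subset _ _ (Finset.min'_mem _ _)
  exact ⟨le_antisymm h2 h1, hfE⟩

section Core
set_option linter.unusedSectionVars false

variable [Fintype S] [Nonempty S]
variable {κ : Type*} [Fintype κ]
variable (Sd : Fin N → Finset (Fin N)) (sc : Fin N → κ → (Fin N → S) → Fin N → ℝ)

/-- The consistent inputs matching the query pattern on `Sd θ.1`. -/
noncomputable def Xset (ρ : Fin N → Option S) (θ : Fin N × κ × (Fin N → S)) :
    Finset (Fin N → S) :=
  Finset.univ.filter fun x => ConsistentWith ρ x ∧ ∀ u ∈ Sd θ.1, x u = θ.2.2 u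

/-- `j`'s dependence set is fully fixed by `ρ`. -/
def FF (ρ : Fin N → Option S) (j : Fin N) : Prop := ∀ u ∈ Sd j, (ρ u).isSome

theorem Xset_anti {ρ ρ' : Fin N → Option S} (h : Ext ρ ρ') (θ : Fin N × κ × (Fin N → S)) :
    Xset Sd ρ' θ ⊆ Xset Sd ρ θ := by
  intro x hx
  simp only [Xset, Finset.mem_filter, Finset.mem_univ, true_and] at hx ⊢
  exact ⟨cons_anti h hx.1, hx.2⟩

theorem FF_mono {ρ ρ' : Fin N → Option S} (h : Ext ρ ρ') {j : Fin N} (hj : FF Sd ρ j) :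
    FF Sd ρ' j := fun u hu => ext_isSome h (hj u hu)

/-- Query `θ` is served by `ρ` with exceptional set `A` and threshold `β`. -/
def ServedWith (ρ : Fin N → Option S) (θ : Fin N × κ × (Fin N → S)) (A : Finset (Fin N))
    (β : ℝ) : Prop :=
  Xset Sd ρ θ = ∅ ∨
  (∀ j : Fin N, j ≤ θ.1 → FF Sd ρ j ∨ j ∈ A) ∨
  (∃ h₀ : Fin N, FF Sd ρ h₀ ∧ h₀ ≤ θ.1 ∧
    (∀ x ∈ Xset Sd ρ θ, sc θ.1 θ.2.1 x h₀ = β) ∧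
    ∀ j : Fin N, j ≤ θ.1 → FF Sd ρ j ∨ j ∈ A ∨
      ((∀ x ∈ Xset Sd ρ θ, sc θ.1 θ.2.1 x j ≤ β) ∧
        (h₀ < j ∨ ∀ x ∈ Xset Sd ρ θ, sc θ.1 θ.2.1 x j < β)))

def Served (c' : ℕ) (ρ : Fin N → Option S) (θ : Fin N × κ × (Fin N → S)) : Prop :=
  ∃ A β, A.card ≤ c' ∧ ServedWith Sd sc ρ θ A β

theorem servedWith_mono {ρ ρ' : Fin N → Option S} (h : Ext ρ ρ')
    {θ : Fin N × κ × (Fin N → S)} {A : Finset (Fin N)} {β : ℝ}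
    (hs : ServedWith Sd sc ρ θ A β) : ServedWith Sd sc ρ' θ A β := by
  rcases hs with hs | hs | ⟨h₀, hFF, hle, hconst, hdom⟩
  · left
    exact Finset.subset_empty.mp (hs ▸ Xset_anti Sd h θ)
  · right; left
    intro j hj
    exact (hs j hj).imp (FF_mono Sd h) id
  · right; right
    refine ⟨h₀, FF_mono Sd h hFF, hle, fun x hx => hconst x (Xset_anti Sd h θ hx), ?_⟩
    intro j hj
    rcases hdom j hj with hd | hd | ⟨hd1, hd2⟩
    · exact Or.inl (FF_mono Sd h hd)
    · exact Or.inr (Or.inl hd)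
    · refine Or.inr (Or.inr ⟨fun x hx => hd1 x (Xset_anti Sd h θ hx), ?_⟩)
      exact hd2.imp id (fun hh x hx => hh x (Xset_anti Sd h θ hx))

theorem served_mono {c' : ℕ} {ρ ρ' : Fin N → Option S} (h : Ext ρ ρ')
    {θ : Fin N × κ × (Fin N → S)} (hs : Served Sd sc c' ρ θ) : Served Sd sc c' ρ' θ := by
  obtain ⟨A, β, hA, hsw⟩ := hs
  exact ⟨A, β, hA, servedWith_mono Sd sc h hsw⟩

/-- Maximal score of position `j` over inputs compatible with the query. -/
noncomputable def mval (ρ : Fin N → Option S) (θ : Fin N × κ × (Fin N → S)) (j : Fin N) : ℝ :=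
  if h : (Xset Sd ρ θ).Nonempty then (Xset Sd ρ θ).sup' h (fun x => sc θ.1 θ.2.1 x j) else 0

/-- A maximizing input for position `j`. -/
noncomputable def wit (ρ : Fin N → Option S) (θ : Fin N × κ × (Fin N → S)) (j : Fin N) :
    Fin N → S :=
  if h : (Xset Sd ρ θ).Nonempty then
    Classical.choose (Finset.exists_mem_eq_sup' h (fun x => sc θ.1 θ.2.1 x j))
  else fun _ => Classical.arbitrary S

theorem wit_mem {ρ : Fin N → Option S} {θ : Fin N × κ × (Fin N → S)}
    (h : (Xset Sd ρ θ).Nonempty) (j : Fin N) : wit Sd sc ρ θ j ∈ Xset Sd ρ θ := by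
  rw [wit, dif_pos h]
  exact (Classical.choose_spec (Finset.exists_mem_eq_sup' h (fun x => sc θ.1 θ.2.1 x j))).1

theorem wit_eq {ρ : Fin N → Option S} {θ : Fin N × κ × (Fin N → S)}
    (h : (Xset Sd ρ θ).Nonempty) (j : Fin N) :
    sc θ.1 θ.2.1 (wit Sd sc ρ θ j) j = mval Sd sc ρ θ j := by
  rw [wit, mval, dif_pos h, dif_pos h]
  exact (Classical.choose_spec (Finset.exists_mem_eq_sup' h (fun x => sc θ.1 θ.2.1 x j))).2.symm

theorem le_mval {ρ : Fin N → Option S} {θ : Fin N × κ × (Fin N → S)} {x : Fin N → S}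
    (hx : x ∈ Xset Sd ρ θ) (j : Fin N) : sc θ.1 θ.2.1 x j ≤ mval Sd sc ρ θ j := by
  rw [mval, dif_pos ⟨x, hx⟩]
  exact Finset.le_sup' (fun x => sc θ.1 θ.2.1 x j) hx

/-- Positions at most `i0` whose dependence set is not fully fixed. -/
noncomputable def FreeIsh (ρ : Fin N → Option S) (i0 : Fin N) : Finset (Fin N) :=
  (Finset.Iic i0).filter fun j => ¬ FF Sd ρ j

/-- The strict order "has a larger max score, ties broken by position". -/
def prec (ρ : Fin N → Option S) (θ : Fin N × κ × (Fin N → S)) (j z : Fin N) : Prop :=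
  mval Sd sc ρ θ z < mval Sd sc ρ θ j ∨ (mval Sd sc ρ θ j = mval Sd sc ρ θ z ∧ j < z)

/-- Positions with at most `c'` free-ish predecessors in the `prec` order. -/
noncomputable def Dset (c' : ℕ) (ρ : Fin N → Option S) (θ : Fin N × κ × (Fin N → S)) :
    Finset (Fin N) :=
  (FreeIsh Sd ρ θ.1).filter fun z =>
    ((FreeIsh Sd ρ θ.1).filter fun j => prec Sd sc ρ θ j z).card ≤ c'

theorem prec_trans {ρ : Fin N → Option S} {θ : Fin N × κ × (Fin N → S)} {j z w : Fin N}
    (h1 : prec Sd sc ρ θ j z) (h2 : prec Sd sc ρ θ z w) : prec Sd sc ρ θ j w := by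
  rcases h1 with h1 | ⟨h1, h1'⟩ <;> rcases h2 with h2 | ⟨h2, h2'⟩
  · exact Or.inl (lt_trans h2 h1)
  · exact Or.inl (h2 ▸ h1)
  · exact Or.inl (lt_of_lt_of_le h2 (le_of_eq h1.symm))
  · exact Or.inr ⟨h1.trans h2, h1'.trans h2'⟩

theorem prec_total {ρ : Fin N → Option S} {θ : Fin N × κ × (Fin N → S)} {j z : Fin N}
    (h : j ≠ z) : prec Sd sc ρ θ j z ∨ prec Sd sc ρ θ z j := by
  rcases lt_trichotomy (mval Sd sc ρ θ j) (mval Sd sc ρ θ z) with hm | hm | hm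
  · exact Or.inr (Or.inl hm)
  · rcases lt_or_gt_of_ne h with hj | hj
    · exact Or.inl (Or.inr ⟨hm, hj⟩)
    · exact Or.inr (Or.inr ⟨hm.symm, hj⟩)
  · exact Or.inl (Or.inl hm)

theorem Dset_card {c' : ℕ} {ρ : Fin N → Option S} {θ : Fin N × κ × (Fin N → S)}
    (h : c' + 1 ≤ (FreeIsh Sd ρ θ.1).card) : c' + 1 ≤ (Dset Sd sc c' ρ θ).card := by
  classical
  set F := FreeIsh Sd ρ θ.1 with hF
  set r : Fin N → ℕ := fun z => (F.filter fun j => prec Sd sc ρ θ j z).card with hr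
  have hrlt : ∀ z ∈ F, r z < F.card := by
    intro z hz
    apply Finset.card_lt_card
    constructor
    · exact Finset.filter_subset _ _
    · intro hsub
      have := hsub hz
      simp only [Finset.mem_filter] at this
      rcases this.2 with h' | ⟨_, h'⟩
      · exact absurd h' (lt_irrefl _)
      · exact absurd h' (lt_irrefl _)
  have hinj : Set.InjOn r F := by
    intro z hz z' hz' heq
    by_contra hne
    have key : ∀ w w' : Fin N, w ∈ F → w' ∈ F → prec Sd sc ρ θ w w' → r w < r w' := by
      intro w w' hw hw' hprec
      apply Finset.card_lt_card
      constructor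
      · intro j hj
        simp only [Finset.mem_filter] at hj ⊢
        exact ⟨hj.1, prec_trans Sd sc hj.2 hprec⟩
      · intro hsub
        have hmem : w ∈ F.filter fun j => prec Sd sc ρ θ j w' :=
          Finset.mem_filter.mpr ⟨hw, hprec⟩
        have := Finset.mem_filter.mp (hsub hmem)
        rcases this.2 with h' | ⟨_, h'⟩
        · exact absurd h' (lt_irrefl _)
        · exact absurd h' (lt_irrefl _)
    rcases prec_total Sd sc (θ := θ) (ρ := ρ) hne with hp | hp
    · exact absurd (heq ▸ key z z' hz hz' hp) (lt_irrefl _)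
    · exact absurd (heq ▸ key z' z hz' hz hp) (lt_irrefl _)
  have hsubset : Dset Sd sc c' ρ θ ⊆ F := Finset.filter_subset _ _
  have hsplit : (F \ Dset Sd sc c' ρ θ).card = F.card - (Dset Sd sc c' ρ θ).card :=
    Finset.card_sdiff_of_subset hsubset
  have hsub_le : (Dset Sd sc c' ρ θ).card ≤ F.card := Finset.card_le_card hsubset
  have hbad : (F \ Dset Sd sc c' ρ θ).card ≤ F.card - (c' + 1) := by
    have : (F \ Dset Sd sc c' ρ θ).card ≤ (Finset.Ico (c' + 1) F.card).card := by
      apply Finset.card_le_card_of_injOn r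
      · intro z hz
        rw [Finset.mem_coe, Finset.mem_sdiff] at hz
        obtain ⟨hzF, hzD⟩ := hz
        rw [Finset.mem_coe, Finset.mem_Ico]
        constructor
        · by_contra hlt
          push_neg at hlt
          exact hzD (Finset.mem_filter.mpr ⟨hzF, Nat.lt_succ_iff.mp hlt⟩)
        · exact hrlt z hzF
      · exact hinj.mono (fun z hz => (Finset.mem_sdiff.mp hz).1)
    rwa [Nat.card_Ico] at this
  omega

theorem served_of_vac {c' : ℕ} {ρ : Fin N → Option S} {θ : Fin N × κ × (Fin N → S)}
    (h : Xset Sd ρ θ = ∅) : Served Sd sc c' ρ θ :=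
  ⟨∅, 0, Nat.zero_le _, Or.inl h⟩

theorem served_of_few {c' : ℕ} {ρ : Fin N → Option S} {θ : Fin N × κ × (Fin N → S)}
    (h : (FreeIsh Sd ρ θ.1).card ≤ c') : Served Sd sc c' ρ θ := by
  refine ⟨FreeIsh Sd ρ θ.1, 0, h, Or.inr (Or.inl ?_)⟩
  intro j hj
  by_cases hFF : FF Sd ρ j
  · exact Or.inl hFF
  · exact Or.inr (Finset.mem_filter.mpr ⟨Finset.mem_Iic.mpr hj, hFF⟩)

theorem serve_extend {c' : ℕ} {ρ : Fin N → Option S} {θ θ₁ : Fin N × κ × (Fin N → S)}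
    {z : Fin N}
    (hdep : ∀ (θ' : Fin N × κ × (Fin N → S)) (x y : Fin N → S) (j : Fin N),
      ConsistentWith ρ x → ConsistentWith ρ y → (∀ u ∈ Sd j, x u = y u) →
      (∀ u ∈ Sd θ'.1, x u = y u) → sc θ'.1 θ'.2.1 x j = sc θ'.1 θ'.2.1 y j)
    (hz : z ∈ Dset Sd sc c' ρ θ) (hne : (Xset Sd ρ θ).Nonempty)
    (hne₁ : (Xset Sd ρ θ₁).Nonempty)
    (hsame : ∀ u ∈ Sd z, ¬ (ρ u).isSome → wit Sd sc ρ θ z u = wit Sd sc ρ θ₁ z u) :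
    Served Sd sc c' (extendBy ρ (Sd z) (wit Sd sc ρ θ₁ z)) θ := by
  classical
  set ρ' := extendBy ρ (Sd z) (wit Sd sc ρ θ₁ z) with hρ'
  have hext : Ext ρ ρ' := ext_extendBy ρ _ _
  rw [Dset, Finset.mem_filter, FreeIsh, Finset.mem_filter, Finset.mem_Iic] at hz
  obtain ⟨⟨hzle, hzFF⟩, hzcard⟩ := hz
  set A := (FreeIsh Sd ρ θ.1).filter (fun j => prec Sd sc ρ θ j z) with hA
  refine ⟨A, mval Sd sc ρ θ z, hzcard, ?_⟩
  right; right
  refine ⟨z, ?_, hzle, ?_, ?_⟩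
  · intro u hu
    exact extendBy_isSome_of_mem ρ _ hu
  · -- constancy of the score of z
    intro x hx
    have hxρ : x ∈ Xset Sd ρ θ := Xset_anti Sd hext θ hx
    have hxw : sc θ.1 θ.2.1 x z = sc θ.1 θ.2.1 (wit Sd sc ρ θ z) z := by
      apply hdep θ x (wit Sd sc ρ θ z) z
      · exact (Finset.mem_filter.mp hxρ).2.1
      · exact (Finset.mem_filter.mp (wit_mem Sd sc hne z)).2.1
      · intro u hu
        by_cases hus : (ρ u).isSome
        · obtain ⟨s, hs⟩ := Option.isSome_iff_exists.mp hus
          rw [(Finset.mem_filter.mp hxρ).2.1 u s hs,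
            (Finset.mem_filter.mp (wit_mem Sd sc hne z)).2.1 u s hs]
        · rw [consistent_extendBy (Finset.mem_filter.mp hx).2.1 hu hus, hsame u hu hus]
      · intro u hu
        rw [(Finset.mem_filter.mp hxρ).2.2 u hu,
          (Finset.mem_filter.mp (wit_mem Sd sc hne z)).2.2 u hu]
    rw [hxw, wit_eq Sd sc hne z]
  · -- domination
    intro j hj
    by_cases hFFj : FF Sd ρ' j
    · exact Or.inl hFFj
    have hFFρj : ¬ FF Sd ρ j := fun h => hFFj (FF_mono Sd hext h)
    have hjF : j ∈ FreeIsh Sd ρ θ.1 := Finset.mem_filter.mpr ⟨Finset.mem_Iic.mpr hj, hFFρj⟩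
    by_cases hjA : j ∈ A
    · exact Or.inr (Or.inl hjA)
    right; right
    have hnprec : ¬ prec Sd sc ρ θ j z := fun h => hjA (Finset.mem_filter.mpr ⟨hjF, h⟩)
    rw [prec] at hnprec
    push_neg at hnprec
    obtain ⟨hm1, hm2⟩ := hnprec
    have hzFF' : FF Sd ρ' z := fun u hu => extendBy_isSome_of_mem ρ _ hu
    have hzj : z ≠ j := fun h => hFFj (h ▸ hzFF')
    have hble : ∀ x ∈ Xset Sd ρ' θ, sc θ.1 θ.2.1 x j ≤ mval Sd sc ρ θ z := by
      intro x hx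
      calc sc θ.1 θ.2.1 x j ≤ mval Sd sc ρ θ j := le_mval Sd sc (Xset_anti Sd hext θ hx) j
        _ ≤ mval Sd sc ρ θ z := hm1
    refine ⟨hble, ?_⟩
    rcases eq_or_lt_of_le hm1 with heq | hlt
    · left
      exact lt_of_le_of_ne (hm2 heq) hzj
    · right
      intro x hx
      calc sc θ.1 θ.2.1 x j ≤ mval Sd sc ρ θ j := le_mval Sd sc (Xset_anti Sd hext θ hx) j
        _ < mval Sd sc ρ θ z := hlt

end Core

section Greedy
set_option linter.unusedSectionVars false
set_option maxHeartbeats 1000000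

variable [Fintype S] [Nonempty S]
variable {κ : Type*} [Fintype κ]
variable (Sd : Fin N → Finset (Fin N)) (sc : Fin N → κ → (Fin N → S) → Fin N → ℝ)

/-- Cost bookkeeping function for the greedy service procedure. -/
def gg (a W U₁ n : ℕ) : ℕ := a * min n U₁ + a * (n / W) + (if n = 0 then 0 else a)

theorem gg_mono (a W U₁ : ℕ) : Monotone (gg a W U₁) := by
  intro n n' h
  unfold gg
  have h1 : a * min n U₁ ≤ a * min n' U₁ :=
    Nat.mul_le_mul_left a (min_le_min_right U₁ h)
  have h2 : a * (n / W) ≤ a * (n' / W) :=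
    Nat.mul_le_mul_left a (Nat.div_le_div_right h)
  have h3 : (if n = 0 then 0 else a) ≤ (if n' = 0 then 0 else a) := by
    split_ifs with e1 e2 <;> omega
  omega

theorem gg_le (a W U₁ n : ℕ) : gg a W U₁ n ≤ a * U₁ + a * (n / W) + a := by
  unfold gg
  have h1 : a * min n U₁ ≤ a * U₁ := Nat.mul_le_mul_left a (min_le_right n U₁)
  have h2 : (if n = 0 then 0 else a) ≤ a := by split_ifs <;> omega
  omega

theorem gg_step_one {a W U₁ n : ℕ} (h0 : 0 < n) (h1 : n ≤ U₁) :
    gg a W U₁ (n - 1) + a ≤ gg a W U₁ n := by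
  unfold gg
  have e1 : min (n - 1) U₁ = n - 1 := min_eq_left (by omega)
  have e2 : min n U₁ = n := min_eq_left h1
  have e3 : a * ((n - 1) / W) ≤ a * (n / W) :=
    Nat.mul_le_mul_left a (Nat.div_le_div_right (by omega))
  have e4 : (if n - 1 = 0 then 0 else a) ≤ a := by split_ifs <;> omega
  have e5 : a * (n - 1) + a = a * n := by
    have : n - 1 + 1 = n := by omega
    calc a * (n - 1) + a = a * (n - 1 + 1) := by ring
      _ = a * n := by rw [this]
  have e6 : (if n = 0 then 0 else a) = a := by simp [Nat.pos_iff_ne_zero.mp h0]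
  rw [e1, e2, e6]
  omega

theorem gg_step_W {a W U₁ n : ℕ} (hW : 0 < W) (h1 : U₁ < n) (h2 : W ≤ n) :
    gg a W U₁ (n - W) + a ≤ gg a W U₁ n := by
  unfold gg
  have e1 : a * min (n - W) U₁ ≤ a * min n U₁ :=
    Nat.mul_le_mul_left a (min_le_min_right U₁ (by omega))
  have e2 : (n - W) / W + 1 = n / W := by
    have : n - W + W = n := by omega
    rw [← Nat.add_div_right (n - W) hW, this]
  have e3 : a * ((n - W) / W) + a = a * (n / W) := by
    calc a * ((n - W) / W) + a = a * ((n - W) / W + 1) := by ring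
      _ = a * (n / W) := by rw [e2]
  have e4 : (if n - W = 0 then 0 else a) ≤ (if n = 0 then 0 else a) := by
    split_ifs <;> omega
  omega

theorem card_supported_le (A : Finset (Fin N)) (s₀ : S) :
    (Finset.univ.filter fun f : Fin N → S => ∀ u, u ∉ A → f u = s₀).card ≤
      Fintype.card S ^ A.card := by
  classical
  have : (Finset.univ.filter fun f : Fin N → S => ∀ u, u ∉ A → f u = s₀).card ≤
      (Finset.univ : Finset (A → S)).card := by
    apply Finset.card_le_card_of_injOn (fun f (u : A) => f u.1)
    · intro f _
      exact Finset.mem_univ _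
    · intro f hf f' hf' heq
      simp only [Finset.coe_filter, Set.mem_setOf_eq, Finset.mem_univ, true_and] at hf hf'
      funext u
      by_cases hu : u ∈ A
      · exact congrFun heq ⟨u, hu⟩
      · rw [hf u hu, hf' u hu]
  rwa [Finset.card_univ, Fintype.card_fun, Fintype.card_coe] at this

theorem greedy (Q : Finset (Fin N × κ × (Fin N → S))) (a c' W U₁ : ℕ)
    (ρb : Fin N → Option S)
    (hdep : ∀ (θ : Fin N × κ × (Fin N → S)) (x y : Fin N → S) (j : Fin N),
      ConsistentWith ρb x → ConsistentWith ρb y → (∀ u ∈ Sd j, x u = y u) →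
      (∀ u ∈ Sd θ.1, x u = y u) → sc θ.1 θ.2.1 x j = sc θ.1 θ.2.1 y j)
    (hW : 0 < W)
    (hpige : Fintype.card S ^ a * N * W ≤ (U₁ + 1) * (c' + 1))
    (hSd : ∀ j, (Sd j).card ≤ a) :
    ∀ n : ℕ, ∀ ρ : Fin N → Option S, Ext ρb ρ →
      (Q.filter fun θ => ¬ Served Sd sc c' ρ θ).card = n →
      ∃ ρ', Ext ρ ρ' ∧ cost ρ' ≤ cost ρ + gg a W U₁ n ∧
        ∀ θ ∈ Q, Served Sd sc c' ρ' θ := by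
  classical
  intro n
  induction n using Nat.strong_induction_on with
  | _ n IH =>
  intro ρ hext hcard
  set Uns := Q.filter fun θ => ¬ Served Sd sc c' ρ θ with hUns
  by_cases h0 : Uns = ∅
  · refine ⟨ρ, Ext.refl ρ, Nat.le_add_right _ _, ?_⟩
    intro θ hθ
    by_contra hns
    have : θ ∈ Uns := Finset.mem_filter.mpr ⟨hθ, hns⟩
    rw [h0] at this
    exact absurd this (Finset.notMem_empty θ)
  have hn0 : 0 < n := by
    rcases Finset.nonempty_of_ne_empty h0 with ⟨θ, hθ⟩
    have := Finset.card_pos.mpr ⟨θ, hθ⟩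
    omega
  have hdepρ : ∀ (θ : Fin N × κ × (Fin N → S)) (x y : Fin N → S) (j : Fin N),
      ConsistentWith ρ x → ConsistentWith ρ y → (∀ u ∈ Sd j, x u = y u) →
      (∀ u ∈ Sd θ.1, x u = y u) → sc θ.1 θ.2.1 x j = sc θ.1 θ.2.1 y j :=
    fun θ x y j hx hy => hdep θ x y j (cons_anti hext hx) (cons_anti hext hy)
  have hUnsNe : ∀ θ ∈ Uns, (Xset Sd ρ θ).Nonempty := by
    intro θ hθ
    by_contra hvac
    rw [Finset.not_nonempty_iff_eq_empty] at hvac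
    exact (Finset.mem_filter.mp hθ).2 (served_of_vac Sd sc hvac)
  have hUnsD : ∀ θ ∈ Uns, c' + 1 ≤ (Dset Sd sc c' ρ θ).card := by
    intro θ hθ
    apply Dset_card
    by_contra hfew
    push_neg at hfew
    exact (Finset.mem_filter.mp hθ).2 (served_of_few Sd sc (by omega))
  -- generic single-bin service step
  have hstep : ∀ (θ₁ : Fin N × κ × (Fin N → S)), θ₁ ∈ Uns → ∀ z : Fin N,
      ∀ T : Finset (Fin N × κ × (Fin N → S)), T ⊆ Uns → θ₁ ∈ T →
      (∀ θ ∈ T, z ∈ Dset Sd sc c' ρ θ ∧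
        (∀ u ∈ Sd z, ¬ (ρ u).isSome → wit Sd sc ρ θ z u = wit Sd sc ρ θ₁ z u)) →
      ∃ ρ'', Ext ρ ρ'' ∧ cost ρ'' ≤ cost ρ + a ∧
        (Q.filter fun θ => ¬ Served Sd sc c' ρ'' θ) ⊆ Uns \ T := by
    intro θ₁ hθ₁ z T hTU hθ₁T hT
    set ρ'' := extendBy ρ (Sd z) (wit Sd sc ρ θ₁ z) with hρ''
    refine ⟨ρ'', ext_extendBy ρ _ _, ?_, ?_⟩
    · exact le_trans (cost_extendBy ρ _ _) (by have := hSd z; omega)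
    · intro θ hθ
      rw [Finset.mem_filter] at hθ
      rw [Finset.mem_sdiff]
      constructor
      · exact Finset.mem_filter.mpr ⟨hθ.1, fun hs => hθ.2 (served_mono Sd sc (ext_extendBy ρ _ _) hs)⟩
      · intro hθT
        obtain ⟨hz, hsame⟩ := hT θ hθT
        exact hθ.2 (serve_extend Sd sc hdepρ hz (hUnsNe θ (hTU hθT)) (hUnsNe θ₁ hθ₁) hsame)
  by_cases hsmall : n ≤ U₁
  · -- serve a single query
    obtain ⟨θ, hθ⟩ := Finset.nonempty_of_ne_empty h0
    have hDpos : 0 < (Dset Sd sc c' ρ θ).card := by have := hUnsD θ hθ; omega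
    obtain ⟨z, hz⟩ := Finset.card_pos.mp hDpos
    obtain ⟨ρ'', hext'', hcost'', hsub''⟩ :=
      hstep θ hθ z {θ} (Finset.singleton_subset_iff.mpr hθ) (Finset.mem_singleton_self θ)
        (by intro θ' hθ'
            rw [Finset.mem_singleton] at hθ'
            subst hθ'
            exact ⟨hz, fun _ _ _ => rfl⟩)
    have hcard'' : (Q.filter fun θ => ¬ Served Sd sc c' ρ'' θ).card ≤ n - 1 := by
      calc (Q.filter fun θ => ¬ Served Sd sc c' ρ'' θ).card
          ≤ (Uns \ {θ}).card := Finset.card_le_card hsub''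
        _ = n - 1 := by
            rw [Finset.card_sdiff_of_subset (Finset.singleton_subset_iff.mpr hθ), hcard,
              Finset.card_singleton]
    set n'' := (Q.filter fun θ => ¬ Served Sd sc c' ρ'' θ).card with hn''
    obtain ⟨ρ', hext', hcost', hall⟩ := IH n'' (by omega) ρ'' (hext.trans hext'') rfl
    refine ⟨ρ', hext''.trans hext', ?_, hall⟩
    calc cost ρ' ≤ cost ρ'' + gg a W U₁ n'' := hcost'
      _ ≤ cost ρ + a + gg a W U₁ (n - 1) := by
          have := gg_mono a W U₁ (show n'' ≤ n - 1 by omega)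
          omega
      _ ≤ cost ρ + gg a W U₁ n := by
          have := gg_step_one (a := a) (W := W) hn0 hsmall
          omega
  · -- pigeonhole step
    push_neg at hsmall
    set s₀ : S := Classical.arbitrary S with hs₀
    set key : (Fin N × κ × (Fin N → S)) × Fin N → Fin N × (Fin N → S) :=
      fun p => (p.2, fun u => if u ∈ Sd p.2 ∧ ¬ (ρ u).isSome
        then wit Sd sc ρ p.1 p.2 u else s₀) with hkey
    set pairs := Uns.biUnion (fun θ => (Dset Sd sc c' ρ θ).image fun z => (θ, z)) with hpairs
    have hpairscard : n * (c' + 1) ≤ pairs.card := by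
      rw [hpairs, Finset.card_biUnion]
      · calc n * (c' + 1) = ∑ _θ ∈ Uns, (c' + 1) := by rw [Finset.sum_const, hcard]; ring
          _ ≤ ∑ θ ∈ Uns, ((Dset Sd sc c' ρ θ).image fun z => (θ, z)).card := by
              apply Finset.sum_le_sum
              intro θ hθ
              rw [Finset.card_image_of_injective _ (fun z z' h => (Prod.ext_iff.mp h).2)]
              exact hUnsD θ hθ
      · intro θ hθ θ' hθ' hne
        rw [Function.onFun, Finset.disjoint_left]
        intro p hp hp'
        rw [Finset.mem_image] at hp hp'
        obtain ⟨z, _, rfl⟩ := hp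
        obtain ⟨z', _, h⟩ := hp'
        exact hne ((Prod.ext_iff.mp h).1.symm)
    set bins := (Finset.univ : Finset (Fin N)).biUnion (fun z =>
      ((Finset.univ.filter fun f : Fin N → S =>
        ∀ u, ¬ (u ∈ Sd z ∧ ¬ (ρ u).isSome) → f u = s₀)).image fun f => (z, f)) with hbins
    have hmaps : ∀ p ∈ pairs, key p ∈ bins := by
      intro p _
      rw [hbins, Finset.mem_biUnion]
      refine ⟨p.2, Finset.mem_univ _, ?_⟩
      rw [Finset.mem_image]
      refine ⟨(key p).2, ?_, ?_⟩
      · rw [Finset.mem_filter]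
        refine ⟨Finset.mem_univ _, ?_⟩
        intro u hu
        simp only [hkey, if_neg hu]
      · rfl
    have hbinscard : bins.card ≤ N * Fintype.card S ^ a := by
      calc bins.card ≤ ∑ z ∈ (Finset.univ : Finset (Fin N)),
          (((Finset.univ.filter fun f : Fin N → S =>
            ∀ u, ¬ (u ∈ Sd z ∧ ¬ (ρ u).isSome) → f u = s₀)).image fun f => (z, f)).card :=
            Finset.card_biUnion_le
        _ ≤ ∑ _z ∈ (Finset.univ : Finset (Fin N)), Fintype.card S ^ a := by
            apply Finset.sum_le_sum
            intro z _
            calc (((Finset.univ.filter fun f : Fin N → S =>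
                ∀ u, ¬ (u ∈ Sd z ∧ ¬ (ρ u).isSome) → f u = s₀)).image fun f => (z, f)).card
                ≤ ((Finset.univ.filter fun f : Fin N → S =>
                  ∀ u, ¬ (u ∈ Sd z ∧ ¬ (ρ u).isSome) → f u = s₀)).card :=
                  Finset.card_image_le
              _ = ((Finset.univ.filter fun f : Fin N → S =>
                  ∀ u, u ∉ ((Sd z).filter fun u => ¬ (ρ u).isSome) → f u = s₀)).card := by
                  congr 1
                  apply Finset.filter_congr
                  intro f _
                  constructor
                  · intro h u hu
                    apply h
                    intro hc
                    exact hu (Finset.mem_filter.mpr ⟨hc.1, hc.2⟩)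
                  · intro h u hu
                    apply h
                    intro hc
                    have := Finset.mem_filter.mp hc
                    exact hu ⟨this.1, this.2⟩
              _ ≤ Fintype.card S ^ ((Sd z).filter fun u => ¬ (ρ u).isSome).card :=
                  card_supported_le _ _
              _ ≤ Fintype.card S ^ a := by
                  apply Nat.pow_le_pow_right Fintype.card_pos
                  exact le_trans (Finset.card_le_card (Finset.filter_subset _ _)) (hSd z)
        _ = N * Fintype.card S ^ a := by
            rw [Finset.sum_const, Finset.card_univ, Fintype.card_fin, smul_eq_mul]
    have hbinsne : bins.Nonempty := by
      obtain ⟨θ, hθ⟩ := Finset.nonempty_of_ne_empty h0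
      have hDpos : 0 < (Dset Sd sc c' ρ θ).card := by have := hUnsD θ hθ; omega
      obtain ⟨z, hz⟩ := Finset.card_pos.mp hDpos
      have hp : (θ, z) ∈ pairs := by
        rw [hpairs, Finset.mem_biUnion]
        exact ⟨θ, hθ, Finset.mem_image_of_mem _ hz⟩
      exact ⟨key (θ, z), hmaps _ hp⟩
    obtain ⟨b, hb, hfib⟩ := Finset.exists_le_card_fiber_of_mul_le_card_of_maps_to hmaps hbinsne
      (by calc bins.card * W ≤ N * Fintype.card S ^ a * W := Nat.mul_le_mul_right W hbinscard
            _ = Fintype.card S ^ a * N * W := by ring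
            _ ≤ (U₁ + 1) * (c' + 1) := hpige
            _ ≤ n * (c' + 1) := Nat.mul_le_mul_right _ (by omega)
            _ ≤ pairs.card := hpairscard)
    set fiber := pairs.filter fun p => key p = b with hfiber
    have hfibne : fiber.Nonempty := Finset.card_pos.mp (by omega)
    obtain ⟨p₁, hp₁⟩ := hfibne
    set θ₁ := p₁.1 with hθ₁def
    set z := p₁.2 with hzdef
    have hpairs_mem : ∀ p ∈ pairs, p.1 ∈ Uns ∧ p.2 ∈ Dset Sd sc c' ρ p.1 := by
      intro p hp
      rw [hpairs, Finset.mem_biUnion] at hp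
      obtain ⟨θ, hθ, hp⟩ := hp
      rw [Finset.mem_image] at hp
      obtain ⟨z', hz', rfl⟩ := hp
      exact ⟨hθ, hz'⟩
    have hfib_snd : ∀ p ∈ fiber, p.2 = z := by
      intro p hp
      have h1 := (Finset.mem_filter.mp hp).2
      have h2 := (Finset.mem_filter.mp hp₁).2
      have := h1.trans h2.symm
      exact (Prod.ext_iff.mp this).1
    have hθ₁Uns : θ₁ ∈ Uns := (hpairs_mem p₁ (Finset.mem_filter.mp hp₁).1).1
    set T := fiber.image Prod.fst with hT
    have hTcard : W ≤ T.card := by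
      rw [hT, Finset.card_image_of_injOn]
      · omega
      · intro p hp p' hp' heq
        have := (hfib_snd p hp).trans (hfib_snd p' hp').symm
        exact Prod.ext heq this
    have hTU : T ⊆ Uns := by
      intro θ hθ
      rw [hT, Finset.mem_image] at hθ
      obtain ⟨p, hp, rfl⟩ := hθ
      exact (hpairs_mem p (Finset.mem_filter.mp hp).1).1
    have hθ₁T : θ₁ ∈ T := Finset.mem_image_of_mem _ hp₁
    obtain ⟨ρ'', hext'', hcost'', hsub''⟩ := hstep θ₁ hθ₁Uns z T hTU hθ₁T (by
      intro θ hθ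
      rw [hT, Finset.mem_image] at hθ
      obtain ⟨p, hp, rfl⟩ := hθ
      have hpz := hfib_snd p hp
      have hpD := (hpairs_mem p (Finset.mem_filter.mp hp).1).2
      constructor
      · rwa [hpz] at hpD
      · intro u hu hus
        have h1 := (Finset.mem_filter.mp hp).2
        have h2 := (Finset.mem_filter.mp hp₁).2
        have heq := congrFun (Prod.ext_iff.mp (h1.trans h2.symm)).2 u
        simp only [hkey, hpz] at heq
        rw [if_pos ⟨hu, hus⟩, if_pos] at heq
        · exact heq
        · exact ⟨hu, hus⟩)
    have hcard'' : (Q.filter fun θ => ¬ Served Sd sc c' ρ'' θ).card ≤ n - W := by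
      calc (Q.filter fun θ => ¬ Served Sd sc c' ρ'' θ).card
          ≤ (Uns \ T).card := Finset.card_le_card hsub''
        _ = n - T.card := by rw [Finset.card_sdiff_of_subset hTU, hcard]
        _ ≤ n - W := by omega
    have hWn : W ≤ n := by
      have := Finset.card_le_card hTU
      rw [hcard] at this
      omega
    set n'' := (Q.filter fun θ => ¬ Served Sd sc c' ρ'' θ).card with hn''
    obtain ⟨ρ', hext', hcost', hall⟩ := IH n'' (by omega) ρ'' (hext.trans hext'') rfl
    refine ⟨ρ', hext''.trans hext', ?_, hall⟩
    calc cost ρ' ≤ cost ρ'' + gg a W U₁ n'' := hcost'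
      _ ≤ cost ρ + a + gg a W U₁ (n - W) := by
          have := gg_mono a W U₁ (show n'' ≤ n - W by omega)
          omega
      _ ≤ cost ρ + gg a W U₁ n := by
          have := gg_step_W (a := a) (U₁ := U₁) hW hsmall hWn
          omega

end Greedy

section Assembly
set_option linter.unusedSectionVars false
set_option maxHeartbeats 1000000

variable [Fintype S] [Nonempty S]
variable {κ : Type*} [Fintype κ]
variable (Sd : Fin N → Finset (Fin N)) (sc : Fin N → κ → (Fin N → S) → Fin N → ℝ)

theorem served_det {ρ₁ ρ' : Fin N → Option S} (hext : Ext ρ₁ ρ')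
    {θ : Fin N × κ × (Fin N → S)} {A : Finset (Fin N)} {β : ℝ}
    (hsw : ServedWith Sd sc ρ₁ θ A β)
    (hdep : ∀ (x y : Fin N → S) (j : Fin N), ConsistentWith ρ' x → ConsistentWith ρ' y →
      (∀ u ∈ Sd j, x u = y u) → (∀ u ∈ Sd θ.1, x u = y u) →
      sc θ.1 θ.2.1 x j = sc θ.1 θ.2.1 y j)
    {x y : Fin N → S} (hx : x ∈ Xset Sd ρ' θ) (hy : y ∈ Xset Sd ρ' θ)
    (hagree : ∀ j ∈ A, ∀ u ∈ Sd j, x u = y u) :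
    argmaxLeft θ.1 (fun j => sc θ.1 θ.2.1 x j) = argmaxLeft θ.1 (fun j => sc θ.1 θ.2.1 y j) ∧
    ∀ u ∈ Sd (argmaxLeft θ.1 (fun j => sc θ.1 θ.2.1 x j)), x u = y u := by
  classical
  have hsw' := servedWith_mono Sd sc hext hsw
  have hxc : ConsistentWith ρ' x := (Finset.mem_filter.mp hx).2.1
  have hyc : ConsistentWith ρ' y := (Finset.mem_filter.mp hy).2.1
  have hagreeθ : ∀ u ∈ Sd θ.1, x u = y u := by
    intro u hu
    rw [(Finset.mem_filter.mp hx).2.2 u hu, (Finset.mem_filter.mp hy).2.2 u hu]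
  have hFFeq : ∀ j : Fin N, FF Sd ρ' j → ∀ u ∈ Sd j, x u = y u := by
    intro j hj u hu
    obtain ⟨s, hs⟩ := Option.isSome_iff_exists.mp (hj u hu)
    rw [hxc u s hs, hyc u s hs]
  set E := A ∪ (Finset.univ.filter fun j => FF Sd ρ' j) with hE
  have hagreeE : ∀ j ∈ E, ∀ u ∈ Sd j, x u = y u := by
    intro j hj
    rw [hE, Finset.mem_union] at hj
    rcases hj with hj | hj
    · exact hagree j hj
    · exact hFFeq j (Finset.mem_filter.mp hj).2
  have hEeq : ∀ j ∈ E, sc θ.1 θ.2.1 x j = sc θ.1 θ.2.1 y j := by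
    intro j hj
    exact hdep x y j hxc hyc (hagreeE j hj) hagreeθ
  rcases hsw' with hvac | hcov | ⟨h₀, hFF, hle, hconst, hdom⟩
  · rw [hvac] at hx
    exact absurd hx (Finset.notMem_empty x)
  · have hEcov : ∀ j : Fin N, j ≤ θ.1 → j ∈ E := by
      intro j hj
      rcases hcov j hj with h | h
      · exact Finset.mem_union_right _ (Finset.mem_filter.mpr ⟨Finset.mem_univ _, h⟩)
      · exact Finset.mem_union_left _ h
    obtain ⟨heq, hmem⟩ := argmax_eq θ.1 (fun j => sc θ.1 θ.2.1 x j) (fun j => sc θ.1 θ.2.1 y j)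
      E θ.1 (hEcov θ.1 le_rfl) le_rfl hEeq
      (fun j hj hjE => absurd (hEcov j hj) hjE)
    exact ⟨heq, hagreeE _ hmem⟩
  · have hh₀E : h₀ ∈ E :=
      Finset.mem_union_right _ (Finset.mem_filter.mpr ⟨Finset.mem_univ _, hFF⟩)
    have hfh₀ : sc θ.1 θ.2.1 x h₀ = β := hconst x hx
    have hgh₀ : sc θ.1 θ.2.1 y h₀ = β := hconst y hy
    have hR : ∀ j : Fin N, j ≤ θ.1 → j ∉ E →
        (sc θ.1 θ.2.1 x j ≤ sc θ.1 θ.2.1 x h₀ ∧ sc θ.1 θ.2.1 y j ≤ sc θ.1 θ.2.1 y h₀ ∧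
          (h₀ < j ∨ (sc θ.1 θ.2.1 x j < sc θ.1 θ.2.1 x h₀ ∧
            sc θ.1 θ.2.1 y j < sc θ.1 θ.2.1 y h₀))) := by
      intro j hj hjE
      rcases hdom j hj with h | h | ⟨hub, htie⟩
      · exact absurd (Finset.mem_union_right _
          (Finset.mem_filter.mpr ⟨Finset.mem_univ _, h⟩)) hjE
      · exact absurd (Finset.mem_union_left _ h) hjE
      · refine ⟨by rw [hfh₀]; exact hub x hx, by rw [hgh₀]; exact hub y hy, ?_⟩
        rcases htie with h | h
        · exact Or.inl h
        · exact Or.inr ⟨by rw [hfh₀]; exact h x hx, by rw [hgh₀]; exact h y hy⟩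
    obtain ⟨heq, hmem⟩ := argmax_eq θ.1 (fun j => sc θ.1 θ.2.1 x j) (fun j => sc θ.1 θ.2.1 y j)
      E h₀ hh₀E hle hEeq hR
    exact ⟨heq, hagreeE _ hmem⟩

end Assembly

section Layer
set_option linter.unusedSectionVars false
set_option maxHeartbeats 1000000

variable [Fintype S] [Nonempty S]

theorem act_succ (T : UHAT S) (x : Fin N → S) (k : ℕ) (i : Fin N) :
    T.act x (k+1) i = T.mlp k (T.act x k i +
      ∑ h ∈ Finset.range T.H, (T.Vmat k h).mulVec (T.act x k (argmaxLeft i fun j =>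
        (T.Kmat k h).mulVec (T.act x k j) ⬝ᵥ (T.Qmat k h).mulVec (T.act x k i)))) := rfl

/-- One layer of the induction: given a restriction `ρk` localizing layer-`k` activations,
extend it to localize layer-`k+1` activations. -/
theorem layer_step (T : UHAT S) (k : ℕ) (ρk : Fin N → Option S)
    (Sdk : Fin N → Finset (Fin N)) (ak c' W U₁ : ℕ)
    (hSd : ∀ j, (Sdk j).card ≤ ak)
    (hdet : ∀ ρ'', Ext ρk ρ'' → ∀ j (x y : Fin N → S), ConsistentWith ρ'' x →
      ConsistentWith ρ'' y → (∀ u ∈ Sdk j, x u = y u) → T.act x k j = T.act y k j)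
    (hW : 0 < W) (hpige : Fintype.card S ^ ak * N * W ≤ (U₁ + 1) * (c' + 1)) :
    ∃ ρ', Ext ρk ρ' ∧
      cost ρ' ≤ cost ρk + gg ak W U₁ (N * T.H * Fintype.card S ^ ak) ∧
      ∃ Sd' : Fin N → Finset (Fin N),
        (∀ i, (Sd' i).card ≤ ak + T.H * (Fintype.card S ^ ak * (c' * ak))) ∧
        ∀ ρ'', Ext ρ' ρ'' → ∀ i (x y : Fin N → S), ConsistentWith ρ'' x →
          ConsistentWith ρ'' y → (∀ u ∈ Sd' i, x u = y u) →
          T.act x (k+1) i = T.act y (k+1) i := by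
  classical
  set q := Fintype.card S with hq
  set s₀ : S := Classical.arbitrary S with hs₀
  set sc : Fin N → Fin T.H → (Fin N → S) → Fin N → ℝ := fun i hd x j =>
    (T.Kmat k hd.1).mulVec (T.act x k j) ⬝ᵥ (T.Qmat k hd.1).mulVec (T.act x k i) with hsc
  have hdep : ∀ (θ : Fin N × Fin T.H × (Fin N → S)) (x y : Fin N → S) (j : Fin N),
      ConsistentWith ρk x → ConsistentWith ρk y → (∀ u ∈ Sdk j, x u = y u) →
      (∀ u ∈ Sdk θ.1, x u = y u) → sc θ.1 θ.2.1 x j = sc θ.1 θ.2.1 y j := by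
    intro θ x y j hx hy hj hi
    simp only [hsc]
    rw [hdet ρk (Ext.refl ρk) j x y hx hy hj, hdet ρk (Ext.refl ρk) θ.1 x y hx hy hi]
  set σQ : Fin N → Finset (Fin N → S) := fun i =>
    Finset.univ.filter fun f : Fin N → S => ∀ u, u ∉ Sdk i → f u = s₀ with hσQ
  set Q : Finset (Fin N × Fin T.H × (Fin N → S)) :=
    (Finset.univ : Finset (Fin N)).biUnion (fun i =>
      (Finset.univ : Finset (Fin T.H)).biUnion (fun hd =>
        (σQ i).image fun f => (i, hd, f))) with hQ
  have hQmem : ∀ (i : Fin N) (hd : Fin T.H) (f : Fin N → S),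
      (∀ u, u ∉ Sdk i → f u = s₀) → (i, hd, f) ∈ Q := by
    intro i hd f hf
    rw [hQ, Finset.mem_biUnion]
    refine ⟨i, Finset.mem_univ _, ?_⟩
    rw [Finset.mem_biUnion]
    refine ⟨hd, Finset.mem_univ _, ?_⟩
    exact Finset.mem_image_of_mem _ (Finset.mem_filter.mpr ⟨Finset.mem_univ _, hf⟩)
  have hQcard : Q.card ≤ N * T.H * q ^ ak := by
    calc Q.card ≤ ∑ i ∈ (Finset.univ : Finset (Fin N)),
        ((Finset.univ : Finset (Fin T.H)).biUnion (fun hd => (σQ i).image fun f => (i, hd, f))).card :=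
        Finset.card_biUnion_le
      _ ≤ ∑ _i ∈ (Finset.univ : Finset (Fin N)), T.H * q ^ ak := by
          apply Finset.sum_le_sum
          intro i _
          calc ((Finset.univ : Finset (Fin T.H)).biUnion (fun hd => (σQ i).image fun f => (i, hd, f))).card
              ≤ ∑ _hd ∈ (Finset.univ : Finset (Fin T.H)), (σQ i).card := by
                refine le_trans Finset.card_biUnion_le ?_
                apply Finset.sum_le_sum
                intro hd _
                exact Finset.card_image_le
            _ ≤ ∑ _hd ∈ (Finset.univ : Finset (Fin T.H)), q ^ ak := by
                apply Finset.sum_le_sum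
                intro hd _
                calc (σQ i).card ≤ q ^ (Sdk i).card := card_supported_le (Sdk i) s₀
                  _ ≤ q ^ ak := Nat.pow_le_pow_right Fintype.card_pos (hSd i)
            _ = T.H * q ^ ak := by
                rw [Finset.sum_const, Finset.card_univ, Fintype.card_fin, smul_eq_mul]
      _ = N * (T.H * q ^ ak) := by
          rw [Finset.sum_const, Finset.card_univ, Fintype.card_fin, smul_eq_mul]
      _ = N * T.H * q ^ ak := by ring
  obtain ⟨ρ', hext', hcost', hserved⟩ := greedy Sdk sc Q ak c' W U₁ ρk hdep hW hpige hSd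
    (Q.filter fun θ => ¬ Served Sdk sc c' ρk θ).card ρk (Ext.refl ρk) rfl
  refine ⟨ρ', hext', ?_, ?_⟩
  · refine le_trans hcost' (Nat.add_le_add_left ?_ _)
    apply gg_mono
    exact le_trans (Finset.card_filter_le _ _) hQcard
  · -- extract the exceptional sets
    have hchoice : ∀ θ : Fin N × Fin T.H × (Fin N → S), ∃ (A : Finset (Fin N)) (β : ℝ),
        θ ∈ Q → (A.card ≤ c' ∧ ServedWith Sdk sc ρ' θ A β) := by
      intro θ
      by_cases hθ : θ ∈ Q
      · obtain ⟨A, β, hA, hsw⟩ := hserved θ hθ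
        exact ⟨A, β, fun _ => ⟨hA, hsw⟩⟩
      · exact ⟨∅, 0, fun h => absurd h hθ⟩
    choose Afun βfun hAβ using hchoice
    set Sd' : Fin N → Finset (Fin N) := fun i =>
      Sdk i ∪ (Finset.univ : Finset (Fin T.H)).biUnion (fun hd =>
        (σQ i).biUnion fun f => (Afun (i, hd, f)).biUnion Sdk) with hSd'
    refine ⟨Sd', ?_, ?_⟩
    · intro i
      calc (Sd' i).card ≤ (Sdk i).card +
          ((Finset.univ : Finset (Fin T.H)).biUnion (fun hd =>
            (σQ i).biUnion fun f => (Afun (i, hd, f)).biUnion Sdk)).card :=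
          Finset.card_union_le _ _
        _ ≤ ak + T.H * (q ^ ak * (c' * ak)) := by
            apply Nat.add_le_add (hSd i)
            calc ((Finset.univ : Finset (Fin T.H)).biUnion (fun hd =>
                (σQ i).biUnion fun f => (Afun (i, hd, f)).biUnion Sdk)).card
                ≤ ∑ hd ∈ (Finset.univ : Finset (Fin T.H)),
                  ((σQ i).biUnion fun f => (Afun (i, hd, f)).biUnion Sdk).card :=
                  Finset.card_biUnion_le
              _ ≤ ∑ _hd ∈ (Finset.univ : Finset (Fin T.H)), q ^ ak * (c' * ak) := by
                  apply Finset.sum_le_sum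
                  intro hd _
                  calc ((σQ i).biUnion fun f => (Afun (i, hd, f)).biUnion Sdk).card
                      ≤ ∑ f ∈ σQ i, ((Afun (i, hd, f)).biUnion Sdk).card :=
                      Finset.card_biUnion_le
                    _ ≤ ∑ f ∈ σQ i, c' * ak := by
                        apply Finset.sum_le_sum
                        intro f hf
                        calc ((Afun (i, hd, f)).biUnion Sdk).card
                            ≤ ∑ j ∈ Afun (i, hd, f), (Sdk j).card := Finset.card_biUnion_le
                          _ ≤ ∑ _j ∈ Afun (i, hd, f), ak := Finset.sum_le_sum (fun j _ => hSd j)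
                          _ = (Afun (i, hd, f)).card * ak := by
                              rw [Finset.sum_const, smul_eq_mul]
                          _ ≤ c' * ak := by
                              have hmem : (i, hd, f) ∈ Q := by
                                apply hQmem
                                exact (Finset.mem_filter.mp hf).2
                              exact Nat.mul_le_mul_right ak (hAβ _ hmem).1
                    _ ≤ q ^ ak * (c' * ak) := by
                        have : (σQ i).card ≤ q ^ ak :=
                          le_trans (card_supported_le (Sdk i) s₀)
                            (Nat.pow_le_pow_right Fintype.card_pos (hSd i))
                        calc ∑ _f ∈ σQ i, c' * ak = (σQ i).card * (c' * ak) := by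
                              rw [Finset.sum_const, smul_eq_mul]
                          _ ≤ q ^ ak * (c' * ak) := Nat.mul_le_mul_right _ this
              _ = T.H * (q ^ ak * (c' * ak)) := by
                  rw [Finset.sum_const, Finset.card_univ, Fintype.card_fin, smul_eq_mul]
    · -- the determination property at layer k+1
      intro ρ'' hext'' i x y hx hy hagree
      have hextk : Ext ρk ρ'' := hext'.trans hext''
      have hagreek : ∀ u ∈ Sdk i, x u = y u := by
        intro u hu
        exact hagree u (Finset.mem_union_left _ hu)
      have hacti : T.act x k i = T.act y k i := hdet ρ'' hextk i x y hx hy hagreek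
      rw [act_succ, act_succ]
      have hsum : (∑ h ∈ Finset.range T.H, (T.Vmat k h).mulVec (T.act x k
            (argmaxLeft i fun j =>
              (T.Kmat k h).mulVec (T.act x k j) ⬝ᵥ (T.Qmat k h).mulVec (T.act x k i)))) =
          (∑ h ∈ Finset.range T.H, (T.Vmat k h).mulVec (T.act y k
            (argmaxLeft i fun j =>
              (T.Kmat k h).mulVec (T.act y k j) ⬝ᵥ (T.Qmat k h).mulVec (T.act y k i)))) := by
        apply Finset.sum_congr rfl
        intro h hh
        rw [Finset.mem_range] at hh
        set hd : Fin T.H := ⟨h, hh⟩ with hhd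
        set σ : Fin N → S := fun u => if u ∈ Sdk i then x u else s₀ with hσ
        set θ : Fin N × Fin T.H × (Fin N → S) := (i, hd, σ) with hθ
        have hσsupp : ∀ u, u ∉ Sdk i → σ u = s₀ := fun u hu => if_neg hu
        have hθQ : θ ∈ Q := hQmem i hd σ hσsupp
        have hxX : x ∈ Xset Sdk ρ'' θ := by
          rw [Xset, Finset.mem_filter]
          exact ⟨Finset.mem_univ _, hx, fun u hu => (if_pos hu).symm⟩
        have hyX : y ∈ Xset Sdk ρ'' θ := by
          rw [Xset, Finset.mem_filter]
          refine ⟨Finset.mem_univ _, hy, fun u hu => ?_⟩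
          exact ((if_pos hu).trans (hagreek u hu)).symm
        have hagreeA : ∀ j ∈ Afun θ, ∀ u ∈ Sdk j, x u = y u := by
          intro j hj u hu
          apply hagree
          apply Finset.mem_union_right
          rw [Finset.mem_biUnion]
          refine ⟨hd, Finset.mem_univ _, ?_⟩
          rw [Finset.mem_biUnion]
          refine ⟨σ, Finset.mem_filter.mpr ⟨Finset.mem_univ _, hσsupp⟩, ?_⟩
          rw [Finset.mem_biUnion]
          exact ⟨j, hj, hu⟩
        have hdep'' : ∀ (x' y' : Fin N → S) (j : Fin N), ConsistentWith ρ'' x' →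
            ConsistentWith ρ'' y' → (∀ u ∈ Sdk j, x' u = y' u) → (∀ u ∈ Sdk θ.1, x' u = y' u) →
            sc θ.1 θ.2.1 x' j = sc θ.1 θ.2.1 y' j := by
          intro x' y' j hx' hy' hj hi
          simp only [hsc]
          rw [hdet ρ'' hextk j x' y' hx' hy' hj, hdet ρ'' hextk θ.1 x' y' hx' hy' hi]
        obtain ⟨hargeq, hargagree⟩ := served_det Sdk sc hext'' (hAβ θ hθQ).2 hdep'' hxX hyX hagreeA
        have hsceq : (fun j => (T.Kmat k h).mulVec (T.act x k j) ⬝ᵥ (T.Qmat k h).mulVec (T.act x k i))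
            = fun j => sc i hd x j := rfl
        have hsceqy : (fun j => (T.Kmat k h).mulVec (T.act y k j) ⬝ᵥ (T.Qmat k h).mulVec (T.act y k i))
            = fun j => sc i hd y j := rfl
        have hargeq2 : argmaxLeft i (fun j => sc i hd x j) = argmaxLeft i (fun j => sc i hd y j) :=
          hargeq
        have hargagree2 : ∀ u ∈ Sdk (argmaxLeft i (fun j => sc i hd x j)), x u = y u :=
          hargagree
        have hfin : T.act x k (argmaxLeft i (fun j => sc i hd y j)) =
            T.act y k (argmaxLeft i (fun j => sc i hd y j)) := by
          apply hdet ρ'' hextk _ x y hx hy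
          rw [← hargeq2]
          exact hargagree2
        rw [hsceq, hsceqy, hargeq2, hfin]
      rw [hsum, hacti]

end Layer

end RLem

set_option maxHeartbeats 2000000 in
/-- **Strengthened restriction lemma.** For all `L`, `H`, every finite alphabet
`S`, and every `C ∈ (0,1)`, there are `c`, `K` such that for every UHAT transformer over `S`
with `L` layers and `H` heads per layer and every input length `N > K`, some restriction `ρ`
leaves at least `C·N` positions open while making every activation `y_i^{(l)}` (for layers
`1 ≤ l ≤ L`) depend on at most `c` input positions on inputs consistent with `ρ`. -/
theorem restriction_lemma_strengthened {S : Type*} [Fintype S]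
    (L H : ℕ) (C : ℝ) (hC0 : 0 < C) (hC1 : C < 1) :
    ∃ c K : ℕ, ∀ T : UHAT S, T.L = L → T.H = H → ∀ N : ℕ, K < N →
      ∃ ρ : Fin N → Option S,
        (C * N ≤ ((Finset.univ.filter fun i : Fin N => (ρ i).isNone).card : ℝ)) ∧
        ∀ i : Fin N, ∀ l : ℕ, 1 ≤ l → l ≤ T.L →
          ∃ Sset : Finset (Fin N), Sset.card ≤ c ∧
            ∀ x y : Fin N → S, ConsistentWith ρ x → ConsistentWith ρ y →
              (∀ j ∈ Sset, x j = y j) → T.act x l i = T.act y l i := by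
  classical
  open RLem in
  rcases isEmpty_or_nonempty S with hS | hS
  · refine ⟨0, 0, ?_⟩
    intro T hLT hHT N hKN
    refine ⟨fun _ => none, ?_, ?_⟩
    · have : (Finset.univ.filter fun i : Fin N => (Option.isNone (none : Option S))) =
          (Finset.univ : Finset (Fin N)) := by
        simp
      rw [this, Finset.card_univ, Fintype.card_fin]
      have hN0 : (0:ℝ) ≤ (N:ℝ) := Nat.cast_nonneg N
      nlinarith
    · intro i l _ _
      refine ⟨∅, le_rfl, ?_⟩
      intro x y _ _ _
      exact (IsEmpty.false (x i)).elim
  · set q := Fintype.card S with hqdef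
    have hq1 : 1 ≤ q := Fintype.card_pos
    set γ : ℝ := 1 - C with hγ
    have hγ0 : 0 < γ := by rw [hγ]; linarith
    set Mf : ℕ → ℕ := fun t => ⌈(3*(L+1)*(t+1) : ℝ)/γ⌉₊ + 1 with hMf
    set Wf : ℕ → ℕ := fun t => ⌈(3*(L+1)*(t+1)*(H+1)*((q:ℝ)^t))/γ⌉₊ + 1 with hWf
    set cf : ℕ → ℕ := fun t => Mf t * q^t * Wf t with hcf
    set af : ℕ → ℕ := fun k => Nat.rec 1 (fun _ t => t + H * (q^t * (cf t * t)) + 1) k with haf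
    have hafs : ∀ k, af (k+1) = af k + H * (q^(af k) * (cf (af k) * af k)) + 1 := fun _ => rfl
    have hafmono : Monotone af := monotone_nat_of_le_succ (fun k => by rw [hafs]; omega)
    set Asum := ∑ l ∈ Finset.range L, af l with hAsum
    refine ⟨af L, ⌈(3*((Asum:ℝ)+1))/γ⌉₊ + 1, ?_⟩
    intro T hLT hHT N hKN
    -- the cumulative cost budget
    set bud : ℕ → ℕ := fun l =>
      af l * (N / Mf (af l)) + af l * ((N * H * q ^ (af l)) / Wf (af l)) + af l with hbud
    have main : ∀ k, k ≤ L → ∃ ρk : Fin N → Option S,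
        cost ρk ≤ ∑ l ∈ Finset.range k, bud l ∧
        ∀ l, l ≤ k → ∃ Sdl : Fin N → Finset (Fin N),
          (∀ i, (Sdl i).card ≤ af l) ∧
          ∀ ρ', Ext ρk ρ' → ∀ j (x y : Fin N → S), ConsistentWith ρ' x →
            ConsistentWith ρ' y → (∀ u ∈ Sdl j, x u = y u) →
            T.act x l j = T.act y l j := by
      intro k
      induction k with
      | zero =>
        intro _
        refine ⟨fun _ => none, ?_, ?_⟩
        · simp [cost]
        · intro l hl
          have hl0 : l = 0 := Nat.le_zero.mp hl
          subst hl0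
          refine ⟨fun j => {j}, fun i => by rw [Finset.card_singleton]; exact Nat.le_of_eq rfl, ?_⟩
          intro ρ' _ j x y _ _ hag
          have hxy : x j = y j := hag j (Finset.mem_singleton_self j)
          show T.act x 0 j = T.act y 0 j
          have e1 : T.act x 0 j = fun t => T.embed (x j) t + T.pos j.val t := rfl
          have e2 : T.act y 0 j = fun t => T.embed (y j) t + T.pos j.val t := rfl
          rw [e1, e2, hxy]
      | succ k IH =>
        intro hk1
        obtain ⟨ρk, hcost, hdets⟩ := IH (by omega)
        obtain ⟨Sdk, hSdcard, hdet⟩ := hdets k le_rfl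
        have hW : 0 < Wf (af k) := Nat.succ_pos _
        have hMfpos : 0 < Mf (af k) := Nat.succ_pos _
        have hpige : q ^ (af k) * N * Wf (af k) ≤
            (N / Mf (af k) + 1) * (cf (af k) + 1) := by
          have h1 : N ≤ (N / Mf (af k) + 1) * Mf (af k) := by
            have hdm := Nat.div_add_mod N (Mf (af k))
            have hmod := Nat.mod_lt N hMfpos
            calc N = Mf (af k) * (N / Mf (af k)) + N % Mf (af k) := hdm.symm
              _ ≤ Mf (af k) * (N / Mf (af k)) + Mf (af k) := by omega
              _ = (N / Mf (af k) + 1) * Mf (af k) := by ring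
          calc q ^ (af k) * N * Wf (af k)
              ≤ q ^ (af k) * ((N / Mf (af k) + 1) * Mf (af k)) * Wf (af k) := by
                apply Nat.mul_le_mul_right
                exact Nat.mul_le_mul_left _ h1
            _ = (N / Mf (af k) + 1) * (Mf (af k) * q ^ (af k) * Wf (af k)) := by ring
            _ = (N / Mf (af k) + 1) * cf (af k) := by rw [hcf]
            _ ≤ (N / Mf (af k) + 1) * (cf (af k) + 1) := by
                exact Nat.mul_le_mul_left _ (Nat.le_succ _)
        obtain ⟨ρ', hext', hcost', Sd', hSd'card, hdet'⟩ :=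
          layer_step T k ρk Sdk (af k) (cf (af k)) (Wf (af k)) (N / Mf (af k))
            hSdcard hdet hW hpige
        rw [← hqdef, hHT] at hcost'
        refine ⟨ρ', ?_, ?_⟩
        · rw [Finset.sum_range_succ]
          have hggle : gg (af k) (Wf (af k)) (N / Mf (af k)) (N * H * q ^ (af k)) ≤ bud k :=
            gg_le (af k) (Wf (af k)) (N / Mf (af k)) (N * H * q ^ (af k))
          omega
        · intro l hl
          by_cases hlk : l ≤ k
          · obtain ⟨Sdl, hc, hd⟩ := hdets l hlk
            exact ⟨Sdl, hc, fun ρ'' h'' => hd ρ'' (hext'.trans h'')⟩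
          · have hlk1 : l = k + 1 := by omega
            subst hlk1
            refine ⟨Sd', ?_, hdet'⟩
            intro i
            calc (Sd' i).card ≤ af k + T.H * (q ^ (af k) * (cf (af k) * af k)) := hSd'card i
              _ ≤ af (k+1) := by rw [hafs, hHT]; omega
    obtain ⟨ρfin, hcost, hdets⟩ := main L le_rfl
    refine ⟨ρfin, ?_, ?_⟩
    · -- count the stars
      rw [card_none_eq]
      have hcostN : cost ρfin ≤ N := by
        rw [cost]
        calc (Finset.univ.filter fun u : Fin N => (ρfin u).isSome).card
            ≤ (Finset.univ : Finset (Fin N)).card := Finset.card_filter_le _ _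
          _ = N := by rw [Finset.card_univ, Fintype.card_fin]
      have hcast : ((N - cost ρfin : ℕ) : ℝ) = (N : ℝ) - (cost ρfin : ℝ) := by
        push_cast [Nat.cast_sub hcostN]
        ring
      rw [hcast]
      -- real bound on the cost
      have hterm : ∀ l ∈ Finset.range L, ((bud l : ℕ) : ℝ) ≤
          2 * γ * N / (3 * (L+1)) + af l := by
        intro l _
        set t := af l with ht
        have htpos : (0:ℝ) ≤ (t:ℝ) := Nat.cast_nonneg t
        have hL1 : (0:ℝ) < 3 * ((L:ℝ)+1) := by positivity
        have hNpos : (0:ℝ) ≤ (N:ℝ) := Nat.cast_nonneg N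
        -- term A
        have hA1 : ((N / Mf t : ℕ) : ℝ) * (Mf t : ℝ) ≤ (N : ℝ) := by
          have := Nat.div_mul_le_self N (Mf t)
          exact_mod_cast this
        have hA2 : (3*((L:ℝ)+1)*((t:ℝ)+1)) ≤ γ * (Mf t : ℝ) := by
          have hceil : (3*(L+1)*(t+1) : ℝ)/γ ≤ (⌈(3*(L+1)*(t+1) : ℝ)/γ⌉₊ : ℝ) :=
            Nat.le_ceil _
          have hMft : (Mf t : ℝ) = (⌈(3*(L+1)*(t+1) : ℝ)/γ⌉₊ : ℝ) + 1 := by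
            rw [hMf]
            push_cast
            ring
          rw [hMft]
          rw [div_le_iff₀ hγ0] at hceil
          push_cast at hceil ⊢
          nlinarith
        have hA0 : (0:ℝ) ≤ ((N / Mf t : ℕ) : ℝ) := Nat.cast_nonneg _
        have hA3 : (3*((L:ℝ)+1)*((t:ℝ)+1)) * ((N / Mf t : ℕ) : ℝ) ≤ γ * N := by
          calc (3*((L:ℝ)+1)*((t:ℝ)+1)) * ((N / Mf t : ℕ) : ℝ)
              ≤ (γ * (Mf t : ℝ)) * ((N / Mf t : ℕ) : ℝ) :=
              mul_le_mul_of_nonneg_right hA2 hA0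
            _ = γ * (((N / Mf t : ℕ) : ℝ) * (Mf t : ℝ)) := by ring
            _ ≤ γ * N := mul_le_mul_of_nonneg_left hA1 (le_of_lt hγ0)
        have hTA : ((t * (N / Mf t) : ℕ) : ℝ) ≤ γ * N / (3 * ((L:ℝ)+1)) := by
          rw [le_div_iff₀ hL1]
          push_cast
          nlinarith [hA3, hA0, htpos]
        -- term B
        have hqt : (0:ℝ) < ((q:ℝ))^t := by positivity
        have hB1 : ((N * H * q ^ t / Wf t : ℕ) : ℝ) * (Wf t : ℝ) ≤ (N : ℝ) * H * (q:ℝ)^t := by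
          have := Nat.div_mul_le_self (N * H * q ^ t) (Wf t)
          exact_mod_cast this
        have hB2 : (3*((L:ℝ)+1)*((t:ℝ)+1)*((H:ℝ)+1)*((q:ℝ)^t)) ≤ γ * (Wf t : ℝ) := by
          have hceil : (3*(L+1)*(t+1)*(H+1)*((q:ℝ)^t) : ℝ)/γ ≤
              (⌈(3*(L+1)*(t+1)*(H+1)*((q:ℝ)^t) : ℝ)/γ⌉₊ : ℝ) := Nat.le_ceil _
          have hWft : (Wf t : ℝ) = (⌈(3*(L+1)*(t+1)*(H+1)*((q:ℝ)^t) : ℝ)/γ⌉₊ : ℝ) + 1 := by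
            rw [hWf]
            push_cast
            ring
          rw [hWft]
          rw [div_le_iff₀ hγ0] at hceil
          push_cast at hceil ⊢
          nlinarith
        have hB0 : (0:ℝ) ≤ ((N * H * q ^ t / Wf t : ℕ) : ℝ) := Nat.cast_nonneg _
        have hB3 : (3*((L:ℝ)+1)*((t:ℝ)+1)*((H:ℝ)+1)*((q:ℝ)^t)) * ((N * H * q ^ t / Wf t : ℕ) : ℝ)
            ≤ γ * ((N : ℝ) * H * (q:ℝ)^t) := by
          calc (3*((L:ℝ)+1)*((t:ℝ)+1)*((H:ℝ)+1)*((q:ℝ)^t)) * ((N * H * q ^ t / Wf t : ℕ) : ℝ)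
              ≤ (γ * (Wf t : ℝ)) * ((N * H * q ^ t / Wf t : ℕ) : ℝ) :=
              mul_le_mul_of_nonneg_right hB2 hB0
            _ = γ * (((N * H * q ^ t / Wf t : ℕ) : ℝ) * (Wf t : ℝ)) := by ring
            _ ≤ γ * ((N : ℝ) * H * (q:ℝ)^t) := mul_le_mul_of_nonneg_left hB1 (le_of_lt hγ0)
        have hB4 : (3*((L:ℝ)+1)*((t:ℝ)+1)*((H:ℝ)+1)) * ((N * H * q ^ t / Wf t : ℕ) : ℝ)
            ≤ γ * ((N : ℝ) * H) := by
          have := mul_le_mul_of_nonneg_right hB3 (le_of_lt (inv_pos.mpr hqt))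
          rw [mul_comm] at this
          nlinarith [hqt, hB3, hB0]
        have hB5 : (3*((L:ℝ)+1)*((t:ℝ)+1)) * ((N * H * q ^ t / Wf t : ℕ) : ℝ) ≤ γ * N := by
          have hH1 : (0:ℝ) < (H:ℝ) + 1 := by positivity
          have h1 : (3*((L:ℝ)+1)*((t:ℝ)+1)) * ((N * H * q ^ t / Wf t : ℕ) : ℝ) * ((H:ℝ)+1) ≤
              (γ * (N:ℝ)) * ((H:ℝ)+1) := by
            nlinarith [hB4, hγ0.le, hNpos, Nat.cast_nonneg (α := ℝ) H]
          exact le_of_mul_le_mul_right h1 hH1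
        have hTB : ((t * (N * H * q ^ t / Wf t) : ℕ) : ℝ) ≤ γ * N / (3 * ((L:ℝ)+1)) := by
          rw [le_div_iff₀ hL1]
          push_cast
          nlinarith [hB5, hB0, htpos, mul_nonneg (by positivity : (0:ℝ) ≤ 3*((L:ℝ)+1)) hB0]
        -- combine
        rw [hbud]
        push_cast
        have := hTA
        have := hTB
        push_cast at hTA hTB
        have h2γ : 2 * γ * (N:ℝ) / (3 * ((L:ℝ)+1)) =
            γ * N / (3 * ((L:ℝ)+1)) + γ * N / (3 * ((L:ℝ)+1)) := by ring
        push_cast [h2γ]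
        linarith
      have hsum : ((∑ l ∈ Finset.range L, bud l : ℕ) : ℝ) ≤
          (L:ℝ) * (2 * γ * N / (3 * (L+1))) + (Asum : ℝ) := by
        push_cast
        calc (∑ l ∈ Finset.range L, (bud l : ℝ))
            ≤ ∑ l ∈ Finset.range L, (2 * γ * N / (3 * ((L:ℝ)+1)) + af l) :=
            Finset.sum_le_sum hterm
          _ = (L:ℝ) * (2 * γ * N / (3 * ((L:ℝ)+1))) + ∑ l ∈ Finset.range L, (af l : ℝ) := by
              rw [Finset.sum_add_distrib, Finset.sum_const, Finset.card_range]
              push_cast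
              ring
          _ = (L:ℝ) * (2 * γ * N / (3 * ((L:ℝ)+1))) + (Asum : ℝ) := by
              rw [hAsum]
              push_cast
              ring
      have hAK : (Asum : ℝ) ≤ γ * N / 3 := by
        have hKge : (3*((Asum:ℝ)+1))/γ ≤ ((⌈(3*((Asum:ℝ)+1))/γ⌉₊ : ℕ) : ℝ) := Nat.le_ceil _
        have hNK : ((⌈(3*((Asum:ℝ)+1))/γ⌉₊ : ℕ) : ℝ) + 1 ≤ (N : ℝ) := by
          have : (⌈(3*((Asum:ℝ)+1))/γ⌉₊ : ℕ) + 1 ≤ N := le_of_lt hKN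
          exact_mod_cast this
        rw [div_le_iff₀ hγ0] at hKge
        rw [le_div_iff₀ (by norm_num : (0:ℝ) < 3)]
        nlinarith [hγ0]
      have hLfrac : (L:ℝ) * (2 * γ * N / (3 * ((L:ℝ)+1))) ≤ 2 * γ * N / 3 := by
        have hNpos : (0:ℝ) ≤ (N:ℝ) := Nat.cast_nonneg N
        have hL0 : (0:ℝ) ≤ (L:ℝ) := Nat.cast_nonneg L
        have hfrac : (L:ℝ)/(3*((L:ℝ)+1)) ≤ 1/3 := by
          rw [div_le_div_iff₀ (by positivity) (by norm_num : (0:ℝ) < 3)]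
          linarith
        have hgn : (0:ℝ) ≤ 2*γ*(N:ℝ) := by
          have := mul_nonneg (mul_nonneg (by norm_num : (0:ℝ) ≤ 2) hγ0.le) hNpos
          linarith
        calc (L:ℝ) * (2 * γ * N / (3 * ((L:ℝ)+1)))
            = (2*γ*(N:ℝ)) * ((L:ℝ)/(3*((L:ℝ)+1))) := by ring
          _ ≤ (2*γ*(N:ℝ)) * (1/3) := mul_le_mul_of_nonneg_left hfrac hgn
          _ = 2 * γ * N / 3 := by ring
      have hcostR : (cost ρfin : ℝ) ≤ γ * N := by
        have h1 : (cost ρfin : ℝ) ≤ ((∑ l ∈ Finset.range L, bud l : ℕ) : ℝ) := by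
          exact_mod_cast hcost
        calc (cost ρfin : ℝ) ≤ (L:ℝ) * (2 * γ * N / (3 * (L+1))) + (Asum : ℝ) :=
            le_trans h1 hsum
          _ ≤ 2 * γ * N / 3 + γ * N / 3 := add_le_add hLfrac hAK
          _ = γ * N := by ring
      rw [hγ] at hcostR
      linarith
    · intro i l hl1 hl2
      have hlL : l ≤ L := by rw [← hLT]; exact hl2
      obtain ⟨Sdl, hcard, hdet⟩ := hdets l hlL
      refine ⟨Sdl i, le_trans (hcard i) (hafmono hlL), ?_⟩
      intro x y hx hy hagree
      exact hdet ρfin (Ext.refl _) i x y hx hy hagree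
end

section
/- The prefix-parity chain of thought for Parity, defined for x ∈ {0,1}^N by g(x) = (s_1, s_2, …, s_N) where s_i = x_1 ⊕ x_2 ⊕ ⋯ ⊕ x_i (so g(x) has length N and ends in Parity(x)), is expressible in UHAT: there are constants L, H such that for every n there is a UHAT transformer with at most L layers and H heads per layer computing this CoT on all x with |x·g(x)| = n. -/
open Matrix Filter

/-- The prefix-parity chain of thought: on `x ∈ {0,1}^N` it consists of the parities of the
prefixes `x₁…xᵢ`, `i = 1, …, N`. -/
def prefixParityCoT (x : List Bool) : List Bool :=
  List.ofFn fun i : Fin x.length => parity (x.take (i.val + 1))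

/-! ### Auxiliary material for the proof -/

lemma argmaxLeft_eq {n : ℕ} (i j0 : Fin n) (f : Fin n → ℝ) (h0 : j0 ≤ i)
    (h : ∀ j : Fin n, j ≤ i → j ≠ j0 → f j < f j0) : argmaxLeft i f = j0 := by
  classical
  have hfilt : ((Finset.Iic i).filter fun j => ∀ j' ∈ Finset.Iic i, f j' ≤ f j) = {j0} := by
    ext j
    simp only [Finset.mem_filter, Finset.mem_singleton, Finset.mem_Iic]
    constructor
    · rintro ⟨hj, hmax⟩
      by_contra hne
      exact absurd (hmax j0 h0) (not_le.mpr (h j hj hne))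
    · intro hj; subst hj
      refine ⟨h0, fun j' hj' => ?_⟩
      rcases eq_or_ne j' j with rfl | hne
      · exact le_rfl
      · exact (h j' hj' hne).le
  unfold argmaxLeft
  simp_rw [hfilt]
  exact Finset.min'_singleton j0

lemma parity_take_succ (x : List Bool) (l : ℕ) (h : l < x.length) :
    parity (x.take (l+1)) = xor (parity (x.take l)) (x[l]'h) := by
  unfold parity
  have e : x.take (l+1) = (x.take l).concat x[l] := (List.take_concat_get h).symm
  rw [e]
  rcases hb : x[l] with _ | _ <;>
      simp [List.count_concat, hb, Nat.succ_mod_two_eq_one_iff] <;>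
      rcases Nat.mod_two_eq_zero_or_one ((x.take l).count true) with h2 | h2 <;> simp [h2]

/-- The attention-score matrix of the parity transformer for inputs of length `N`. -/
noncomputable def M5 (N : ℕ) : Matrix (Fin 5) (Fin 5) ℝ :=
  Matrix.of fun a b =>
    if a = 2 ∧ b = 2 then 2 else if a = 3 ∧ b = 1 then -1
    else if a = 2 ∧ b = 1 then -2*((N:ℝ)-1) else 0

open Classical in
/-- Decode a real number back to a bit. -/
noncomputable def decR (r : ℝ) : Bool := if r = 1 then true else false

/-- The bit computed by the MLP of the parity transformer. -/
noncomputable def mlpB (N : ℕ) (z : Fin 5 → ℝ) : Bool :=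
  if (N:ℝ) ≤ z 2 then xor (decR (z 0)) (decR (z 4)) else decR (z 4)

/-- The MLP of the parity transformer. -/
noncomputable def mlpF (N : ℕ) (z : Fin 5 → ℝ) : Fin 5 → ℝ :=
  ![if mlpB N z then 1 else 0, if mlpB N z then 0 else 1, 0, 0, 0]

/-- The parity transformer for inputs of length `N`. -/
noncomputable def Tn (N : ℕ) : UHAT Bool where
  d := 5
  nmax := 2*N
  L := 1
  H := 1
  vocab := Finset.univ
  embed := fun b => ![if b then 1 else 0, 0, 0, 0, 0]
  pos := fun p => ![0, 1, (p:ℝ), (p:ℝ)^2, 0]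
  Kmat := fun _ _ => (M5 N)ᵀ
  Qmat := fun _ _ => 1
  Vmat := fun _ _ => Matrix.of fun a b => if a = 4 ∧ b = 0 then 1 else 0
  mlp := fun _ => mlpF N
  outm := fun v => if v then ![1,0,0,0,0] else ![0,1,0,0,0]

lemma act_zero_eq (N : ℕ) {m : ℕ} (w : Fin m → Bool) (j : Fin m) :
    (Tn N).act w 0 j = ![if w j then 1 else 0, 1, (j.val:ℝ), (j.val:ℝ)^2, 0] := by
  funext t
  fin_cases t <;> simp [UHAT.act, Tn]

lemma score_eq (N : ℕ) {m : ℕ} (w : Fin m → Bool) (i j : Fin m) :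
    ((Tn N).Kmat 0 0).mulVec ((Tn N).act w 0 j) ⬝ᵥ ((Tn N).Qmat 0 0).mulVec ((Tn N).act w 0 i)
      = 2*(j.val:ℝ)*(i.val:ℝ) - (j.val:ℝ)^2 - 2*((N:ℝ)-1)*(j.val:ℝ) := by
  rw [act_zero_eq, act_zero_eq]
  show ((M5 N)ᵀ).mulVec _ ⬝ᵥ (1 : Matrix (Fin 5) (Fin 5) ℝ).mulVec _ = _
  rw [Matrix.one_mulVec]
  simp [Matrix.mulVec, dotProduct, Fin.sum_univ_five, M5, Matrix.transpose_apply]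
  ring

lemma vmat_eq (N : ℕ) (v : Fin 5 → ℝ) :
    ((Tn N).Vmat 0 0).mulVec v = ![0, 0, 0, 0, v 0] := by
  funext t
  fin_cases t <;> simp [Tn, Matrix.mulVec, dotProduct, Fin.sum_univ_five]
  all_goals exact fun h => absurd (Finset.mem_univ _) h

lemma decR_bit (b : Bool) : decR (if b then (1:ℝ) else 0) = b := by
  cases b <;> simp [decR]

lemma argmax_score (N : ℕ) {m : ℕ} (w : Fin m → Bool) (P J : Fin m)
    (hJ2 : (P.val:ℝ) = (N:ℝ) - 1 + (J.val:ℝ)) (hJP : J ≤ P) :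
    (argmaxLeft P fun j =>
      ((Tn N).Kmat 0 0).mulVec ((Tn N).act w 0 j) ⬝ᵥ ((Tn N).Qmat 0 0).mulVec ((Tn N).act w 0 P)) = J := by
  apply argmaxLeft_eq _ _ _ hJP
  intro j hj hne
  rw [score_eq, score_eq]
  have hc : (j.val:ℝ) ≠ (J.val:ℝ) := by
    intro hh
    exact hne (Fin.ext (by exact_mod_cast hh))
  nlinarith [sq_pos_of_ne_zero (sub_ne_zero.mpr hc)]

lemma act_one (N : ℕ) {m : ℕ} (w : Fin m → Bool) (P J : Fin m)
    (hJ2 : (P.val:ℝ) = (N:ℝ) - 1 + (J.val:ℝ)) (hJP : J ≤ P) :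
    (Tn N).act w 1 P
      = mlpF N ![if w P then 1 else 0, 1, (P.val:ℝ), (P.val:ℝ)^2, if w J then 1 else 0] := by
  have h1 : (Tn N).act w 1 P = mlpF N ((Tn N).act w 0 P + ∑ h ∈ Finset.range 1,
      ((Tn N).Vmat 0 h).mulVec ((Tn N).act w 0 (argmaxLeft P fun j =>
        ((Tn N).Kmat 0 h).mulVec ((Tn N).act w 0 j) ⬝ᵥ
          ((Tn N).Qmat 0 h).mulVec ((Tn N).act w 0 P)))) := rfl
  rw [h1, Finset.sum_range_one, argmax_score N w P J hJ2 hJP, act_zero_eq, act_zero_eq, vmat_eq]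
  congr 1
  funext t
  fin_cases t <;> simp
  all_goals (change ((_ : Fin 5 → ℝ) + (_ : Fin 5 → ℝ)) (_ : Fin 5) = (_ : Fin 5 → ℝ) (_ : Fin 5); simp)

lemma outm_mlpF (N : ℕ) (z : Fin 5 → ℝ) :
    (fun v => (Tn N).outm v ⬝ᵥ mlpF N z) = oneHot (mlpB N z) := by
  funext v
  cases v <;> cases hB : mlpB N z <;>
    simp [Tn, mlpF, oneHot, dotProduct, Fin.sum_univ_five, hB]
  all_goals (change ∑ i : Fin 5, _ = _; simp [Fin.sum_univ_five])


/-- The prefix-parity chain of thought has length `N`, ends in `Parity(x)`,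
and is expressible in UHAT. -/
theorem prefix_parity_cot_expressible :
    (∀ x : List Bool, (prefixParityCoT x).length = x.length) ∧
    (∀ x : List Bool, x ≠ [] → [parity x] <:+ prefixParityCoT x) ∧
    ExpressibleUHAT (id : Bool → Bool) prefixParityCoT := by
  have hlen1 : ∀ x : List Bool, (prefixParityCoT x).length = x.length := fun x => by
    simp [prefixParityCoT]
  have hcotget : ∀ (x : List Bool) (l : ℕ) (h : l < (prefixParityCoT x).length),
      (prefixParityCoT x)[l] = parity (x.take (l+1)) := by
    intro x l h
    simp [prefixParityCoT, List.getElem_ofFn]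
  refine ⟨hlen1, ?_, ?_⟩
  · intro x hx
    have hxl : 1 ≤ x.length := List.length_pos_iff.mpr hx
    have hne : prefixParityCoT x ≠ [] := by
      intro h
      rw [← List.length_eq_zero_iff, hlen1] at h
      omega
    refine ⟨(prefixParityCoT x).dropLast, ?_⟩
    have hlast : (prefixParityCoT x).getLast hne = parity x := by
      rw [List.getLast_eq_getElem, hcotget, hlen1]
      have : x.length - 1 + 1 = x.length := by omega
      rw [this, List.take_length]
    rw [← hlast]
    exact List.dropLast_append_getLast hne
  · refine ⟨1, 1, fun n => ⟨Tn (n/2), le_rfl, le_rfl, ?_⟩⟩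
    intro x hlen
    simp only [List.map_id] at hlen ⊢
    set N := x.length with hNdef
    have hc : (prefixParityCoT x).length = N := hlen1 x
    have hn : n = N + N := by
      rw [← hlen]; simp [hc, hNdef]
    have hhalf : n / 2 = N := by omega
    rw [hhalf]
    set s : List Bool := x ++ prefixParityCoT x with hs
    have hsl : s.length = N + N := by simp [hs, hc, hNdef]
    refine ⟨fun v _ => by simp [Tn], by simp [Tn]; omega, ?_⟩
    intro i
    have hiN : i.val < N := hc ▸ i.isLt
    have hN1 : 1 ≤ N := by omega
    have hp : N + i.val - 1 < s.length := by omega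
    rw [UHAT.output]
    rw [dif_pos hp]
    have hL : (Tn N).L = 1 := rfl
    rw [hL]
    set P : Fin s.length := ⟨N + i.val - 1, hp⟩ with hP
    set J : Fin s.length := ⟨i.val, by omega⟩ with hJ
    have hJ2 : (P.val:ℝ) = (N:ℝ) - 1 + (J.val:ℝ) := by
      have : P.val = N - 1 + J.val := by simp [hP, hJ]; omega
      rw [this]
      push_cast [Nat.cast_sub hN1]
      ring
    have hJP : J ≤ P := by
      rw [Fin.le_def]; simp [hP, hJ]; omega
    rw [act_one N s.get P J hJ2 hJP, outm_mlpF]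
    have hwJ : s.get J = x[i.val]'hiN := by
      simp only [hs, List.get_eq_getElem]
      exact List.getElem_append_left hiN
    have hb : mlpB N ![if s.get P then 1 else 0, 1, (P.val:ℝ), (P.val:ℝ)^2,
        if s.get J then 1 else 0] = (prefixParityCoT x).get i := by
      rw [mlpB]
      simp only [Matrix.cons_val_zero, Matrix.cons_val_four, Matrix.cons_val_two,
        Matrix.tail_cons, Matrix.head_cons, decR_bit]
      have hgi : (prefixParityCoT x).get i = parity (x.take (i.val+1)) := by
        rw [List.get_eq_getElem, hcotget]
      rw [hgi]
      simp only [Nat.cast_le]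
      rcases Nat.lt_or_ge i.val 1 with h1 | h1
      · rw [if_neg (by simp only [hP]; omega), hwJ]
        have hi0 : i.val = 0 := by omega
        simp only [hi0]
        rw [parity_take_succ x 0 (by omega)]
        simp [parity]
      · rw [if_pos (by simp only [hP]; omega)]
        have hxN : x.length ≤ P.val := by simp only [hP]; omega
        have hwP : s.get P = parity (x.take i.val) := by
          simp only [hs, List.get_eq_getElem]
          rw [List.getElem_append_right hxN]
          have h2 : P.val - x.length = i.val - 1 := by simp only [hP]; omega
          simp_rw [h2]
          rw [hcotget]
          have h3 : i.val - 1 + 1 = i.val := by omega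
          rw [h3]
        rw [hwP, hwJ, parity_take_succ x i.val hiN]
    rw [hb]
end

section
/- Let N ≥ 1 and define IP : {0,1}^{N+1} × {0,1}^{N+1} → {0,1} by IP(ξ, η) = ⊕_{i=0}^{N} ξ_i · η_{N−i} (the parity of the number of indices i with ξ_i = η_{N−i} = 1). For every partial assignment fixing at most N of the 2(N+1) input coordinates (i.e. every set F of coordinates with |F| ≤ N together with values for the coordinates in F), the function IP is not constant on the set of inputs agreeing with the assignment on F. -/
/-- The inner-product parity `IP(ξ, η) = ⊕_{i=0}^{N} ξ_i · η_{N−i}`: `true` iff the number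
of indices `i` with `ξ_i = η_{N−i} = 1` is odd. -/
def innerParity {N : ℕ} (ξ η : Fin (N + 1) → Bool) : Bool :=
  decide
    ((Finset.univ.filter fun i : Fin (N + 1) => ξ i = true ∧ η i.rev = true).card % 2 = 1)

/-- For every partial assignment fixing at most `N` of the `2(N+1)` input
coordinates (`F` with its prescribed values `val`), the function `IP` is not constant on the
set of inputs agreeing with the assignment on `F`. -/
theorem inner_parity_not_fixed (N : ℕ)
    (F : Finset (Fin (N + 1) ⊕ Fin (N + 1))) (hF : F.card ≤ N)
    (val : Fin (N + 1) ⊕ Fin (N + 1) → Bool) :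
    ∃ ξ η ξ' η' : Fin (N + 1) → Bool,
      (∀ i : Fin (N + 1), Sum.inl i ∈ F → ξ i = val (Sum.inl i)) ∧
      (∀ i : Fin (N + 1), Sum.inr i ∈ F → η i = val (Sum.inr i)) ∧
      (∀ i : Fin (N + 1), Sum.inl i ∈ F → ξ' i = val (Sum.inl i)) ∧
      (∀ i : Fin (N + 1), Sum.inr i ∈ F → η' i = val (Sum.inr i)) ∧
      innerParity ξ η ≠ innerParity ξ' η' := by
  have hfree : ∃ i : Fin (N + 1), Sum.inl i ∉ F ∧ Sum.inr i.rev ∉ F := by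
    by_contra h
    push_neg at h
    have hcard : (Finset.univ : Finset (Fin (N + 1))).card ≤ F.card := by
      apply Finset.card_le_card_of_injOn
        (fun i : Fin (N + 1) => if Sum.inl i ∈ F then Sum.inl i else Sum.inr i.rev)
      · intro i _
        by_cases hi : Sum.inl i ∈ F
        · simpa [hi] using hi
        · simpa [hi] using h i hi
      · intro a _ b _ hab
        by_cases ha : Sum.inl a ∈ F <;> by_cases hb : Sum.inl b ∈ F <;>
          simp [ha, hb] at hab <;>
          first
          | exact hab
          | exact Fin.rev_injective hab
    simp at hcard
    omega
  obtain ⟨i, hi1, hi2⟩ := hfree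
  set ξ : Fin (N + 1) → Bool := fun j => if Sum.inl j ∈ F then val (Sum.inl j) else false with hξ
  set η : Fin (N + 1) → Bool :=
    fun j => if Sum.inr j ∈ F then val (Sum.inr j) else decide (j = i.rev) with hη
  set ξ' : Fin (N + 1) → Bool := Function.update ξ i true with hξ'
  have hξi : ξ i = false := by simp [hξ, hi1]
  have hηi : η i.rev = true := by simp [hη, hi2]
  refine ⟨ξ, η, ξ', η, ?_, ?_, ?_, ?_, ?_⟩
  · intro j hj; simp [hξ, hj]
  · intro j hj; simp [hη, hj]
  · intro j hj
    have : j ≠ i := by rintro rfl; exact hi1 hj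
    simp [hξ', Function.update_of_ne this, hξ, hj]
  · intro j hj; simp [hη, hj]
  · have hset :
        (Finset.univ.filter fun j : Fin (N + 1) => ξ' j = true ∧ η j.rev = true) =
        insert i (Finset.univ.filter fun j : Fin (N + 1) => ξ j = true ∧ η j.rev = true) := by
      ext j
      by_cases hji : j = i
      · subst hji
        simp [hξ', hηi]
      · simp [hξ', Function.update_of_ne hji, hji]
    have hnotmem :
        i ∉ (Finset.univ.filter fun j : Fin (N + 1) => ξ j = true ∧ η j.rev = true) := by
      simp [hξi]
    have hcard :
        (Finset.univ.filter fun j : Fin (N + 1) => ξ' j = true ∧ η j.rev = true).card =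
        (Finset.univ.filter fun j : Fin (N + 1) => ξ j = true ∧ η j.rev = true).card + 1 := by
      rw [hset, Finset.card_insert_of_notMem hnotmem]
    simp only [innerParity, ne_eq, decide_eq_decide, hcard]
    omega
end

section
/- Fix B ≥ 1 and N ≥ 2, and let med : ({0,…,2^B − 1})^N → {0,…,2^B − 1} map a tuple of N numbers to its ⌊N/2⌋-th smallest element (counting multiplicity, 1-indexed). Encode the input as N·B bits (B bits per number). If a partial assignment of the N·B input bits leaves at least ⌈N/2⌉ + 1 of the N numbers completely free (none of their B bits fixed), then med is not constant on the set of inputs agreeing with the assignment. In particular, any partial assignment fixing fewer than ⌊N/2⌋ − 1 bits leaves med non-constant. -/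
/-- The position, among the `N·B` input bits, of the `t`-th bit of the `j`-th number. -/
def bitIndex {N B : ℕ} (j : Fin N) (t : Fin B) : Fin (N * B) :=
  ⟨j.val * B + t.val, by
    have ht := t.isLt
    have hj : j.val + 1 ≤ N := j.isLt
    calc j.val * B + t.val < (j.val + 1) * B := by rw [Nat.add_mul, Nat.one_mul]; omega
      _ ≤ N * B := Nat.mul_le_mul_right B hj⟩

/-- The value (in `{0, …, 2^B − 1}`) of the `j`-th of the `N` `B`-bit numbers encoded in
the `N·B` input bits `w`. -/
def numValAt {N B : ℕ} (w : Fin (N * B) → Bool) (j : Fin N) : ℕ :=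
  ∑ t : Fin B, if w (bitIndex j t) then 2 ^ t.val else 0

/-- The `⌊N/2⌋`-th smallest (1-indexed, counting multiplicity) of the `N` numbers encoded
in `w`. -/
def medOf {N B : ℕ} (w : Fin (N * B) → Bool) : ℕ :=
  (Multiset.sort (↑(List.ofFn (numValAt w)) : Multiset ℕ) (· ≤ ·)).getD (N / 2 - 1) 0

theorem count_zero_ofFn {N : ℕ} (f : Fin N → ℕ) :
    (List.ofFn f).count 0 = (Finset.univ.filter fun j => f j = 0).card := by
  rw [← Multiset.coe_count, ← Fin.univ_val_map, Multiset.count_map, Finset.card_filter]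
  simp [Finset.card, eq_comm, Multiset.countP_eq_card_filter]

theorem sorted_get_zero_iff {l : List ℕ} (hs : l.Pairwise (· ≤ ·)) {i : ℕ} (hi : i < l.length) :
    l.get ⟨i, hi⟩ = 0 ↔ i < l.count 0 := by
  constructor
  · intro h
    have htake : (l.take (i+1)).count 0 = i + 1 := by
      rw [List.count_eq_length.mpr, List.length_take]
      · omega
      · intro b hb
        rw [List.mem_take_iff_getElem] at hb
        obtain ⟨k, hk, hbk⟩ := hb
        have hk' : k < l.length := lt_of_lt_of_le hk (min_le_right _ _)
        rcases Nat.lt_or_ge k i with hlt | hge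
        · have := hs.rel_get_of_lt (show (⟨k, hk'⟩ : Fin _) < ⟨i, hi⟩ from hlt)
          simp only [List.get_eq_getElem] at this h
          omega
        · have hki : k = i := by have := lt_of_lt_of_le hk (min_le_left _ _); omega
          subst hki
          simp only [List.get_eq_getElem] at h
          omega
    calc i + 1 = (l.take (i+1)).count 0 := htake.symm
      _ ≤ l.count 0 := by
          conv_rhs => rw [← List.take_append_drop (i+1) l]
          rw [List.count_append]; omega
  · intro h
    by_contra h0
    have hdrop : (l.drop i).count 0 = 0 := by
      rw [List.count_eq_zero]
      intro hm
      rw [List.mem_iff_getElem] at hm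
      obtain ⟨k, hk, hbk⟩ := hm
      rw [List.getElem_drop] at hbk
      have hik : i + k < l.length := by simp at hk; omega
      have := hs.rel_get_of_le (show (⟨i, hi⟩ : Fin _) ≤ ⟨i + k, hik⟩ from by
        simp [Fin.le_def])
      simp only [List.get_eq_getElem] at this h0
      omega
    have : l.count 0 ≤ i := by
      conv_lhs => rw [← List.take_append_drop i l]
      rw [List.count_append, hdrop]
      have := List.count_le_length (l := l.take i) (a := 0)
      simp [List.length_take] at this ⊢
      omega
    omega

/-- core: med equals 0 iff at least N/2 zeros -/
theorem medOf_eq_zero_iff {N B : ℕ} (hN : 2 ≤ N) (w : Fin (N * B) → Bool) :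
    (medOf w = 0 ↔ N / 2 - 1 < (Finset.univ.filter fun j => numValAt w j = 0).card) := by
  set l := Multiset.sort (↑(List.ofFn (numValAt w)) : Multiset ℕ) (· ≤ ·) with hl
  have hlen : l.length = N := by
    rw [hl, Multiset.length_sort, Multiset.coe_card, List.length_ofFn]
  have hsorted : l.Pairwise (· ≤ ·) := Multiset.pairwise_sort _ _
  have hcount : l.count 0 = (Finset.univ.filter fun j => numValAt w j = 0).card := by
    rw [← count_zero_ofFn (numValAt w), ← Multiset.coe_count, ← Multiset.coe_count,
      hl, Multiset.sort_eq]
  have hi : N / 2 - 1 < l.length := by omega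
  have : medOf w = l.get ⟨N / 2 - 1, hi⟩ := by
    rw [medOf, ← hl, List.getD_eq_get (i := ⟨N / 2 - 1, hi⟩)]
  rw [this, ← hcount]
  exact sorted_get_zero_iff hsorted hi

theorem part1 (B N : ℕ) (hB : 1 ≤ B) (hN : 2 ≤ N)
    (F : Finset (Fin (N * B))) (val : Fin (N * B) → Bool)
    (hS : (N + 1) / 2 + 1 ≤
      (Finset.univ.filter fun j : Fin N => ∀ t : Fin B, bitIndex j t ∉ F).card) :
    ∃ w w' : Fin (N * B) → Bool,
      (∀ i ∈ F, w i = val i) ∧ (∀ i ∈ F, w' i = val i) ∧ medOf w ≠ medOf w' := by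
  classical
  set S := Finset.univ.filter fun j : Fin N => ∀ t : Fin B, bitIndex j t ∉ F with hSdef
  have hmemS : ∀ j, j ∈ S ↔ ∀ t : Fin B, bitIndex j t ∉ F := by
    intro j; simp [hSdef]
  set w : Fin (N * B) → Bool := fun i =>
    if (∃ j ∈ S, ∃ t : Fin B, bitIndex j t = i) then false else val i with hw
  set w' : Fin (N * B) → Bool := fun i =>
    if (∃ j ∈ S, ∃ t : Fin B, bitIndex j t = i) then true else val i with hw'
  have hagree : ∀ i ∈ F, ¬(∃ j ∈ S, ∃ t : Fin B, bitIndex j t = i) := by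
    rintro i hi ⟨j, hjS, t, rfl⟩
    exact (hmemS j).1 hjS t hi
  have hwval : ∀ j ∈ S, numValAt w j = 0 := by
    intro j hj
    rw [numValAt]
    apply Finset.sum_eq_zero
    intro t _
    have : w (bitIndex j t) = false := by
      simp only [hw]; exact if_pos ⟨j, hj, t, rfl⟩
    rw [this]; simp
  have hw'val : ∀ j ∈ S, numValAt w' j ≠ 0 := by
    intro j hj
    have : numValAt w' j = ∑ t : Fin B, 2 ^ t.val := by
      rw [numValAt]
      apply Finset.sum_congr rfl
      intro t _
      have : w' (bitIndex j t) = true := by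
        simp only [hw']; exact if_pos ⟨j, hj, t, rfl⟩
      rw [this]; simp
    rw [this]
    have hpos : 0 < ∑ t : Fin B, 2 ^ t.val := by
      apply Finset.sum_pos
      · intro t _; positivity
      · have : Nonempty (Fin B) := ⟨⟨0, hB⟩⟩
        exact Finset.univ_nonempty
    omega
  have hScard : S.card ≤ N := le_trans (Finset.card_le_card (Finset.subset_univ S))
    (by simp)
  refine ⟨w, w', ?_, ?_, ?_⟩
  · intro i hi; rw [hw]; simp only [if_neg (hagree i hi)]
  · intro i hi; rw [hw']; simp only [if_neg (hagree i hi)]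
  · have h1 : medOf w = 0 := by
      rw [medOf_eq_zero_iff hN]
      have hsub : S ⊆ Finset.univ.filter fun j => numValAt w j = 0 := by
        intro j hj
        simp only [Finset.mem_filter, Finset.mem_univ, true_and]
        exact hwval j hj
      have := Finset.card_le_card hsub
      omega
    have h2 : medOf w' ≠ 0 := by
      rw [Ne, medOf_eq_zero_iff hN]
      have hsub : (Finset.univ.filter fun j => numValAt w' j = 0) ⊆ Sᶜ := by
        intro j hj
        simp only [Finset.mem_filter, Finset.mem_univ, true_and] at hj
        simp only [Finset.mem_compl]
        intro hjS
        exact hw'val j hjS hj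
      have hle := Finset.card_le_card hsub
      have hcompl : (Sᶜ : Finset (Fin N)).card = N - S.card := by
        rw [Finset.card_compl]; simp
      omega
    omega

/-- If a partial assignment (`F` with values `val`) of the `N·B` input
bits leaves at least `⌈N/2⌉ + 1` of the `N` numbers completely free, then the median is not
constant on the inputs agreeing with the assignment; in particular this holds for any
partial assignment fixing fewer than `⌊N/2⌋ − 1` bits. -/
theorem median_not_fixed (B N : ℕ) (hB : 1 ≤ B) (hN : 2 ≤ N)
    (F : Finset (Fin (N * B))) (val : Fin (N * B) → Bool) :
    ((N + 1) / 2 + 1 ≤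
        (Finset.univ.filter fun j : Fin N => ∀ t : Fin B, bitIndex j t ∉ F).card →
      ∃ w w' : Fin (N * B) → Bool,
        (∀ i ∈ F, w i = val i) ∧ (∀ i ∈ F, w' i = val i) ∧ medOf w ≠ medOf w') ∧
    (F.card + 1 < N / 2 →
      ∃ w w' : Fin (N * B) → Bool,
        (∀ i ∈ F, w i = val i) ∧ (∀ i ∈ F, w' i = val i) ∧ medOf w ≠ medOf w') := by

  classical
  refine ⟨part1 B N hB hN F val, fun hF => part1 B N hB hN F val ?_⟩
  set S := Finset.univ.filter fun j : Fin N => ∀ t : Fin B, bitIndex j t ∉ F with hSdef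
  set T := Finset.univ.filter fun j : Fin N => ¬ ∀ t : Fin B, bitIndex j t ∉ F with hTdef
  have hsum : S.card + T.card = N := by
    rw [hSdef, hTdef, Finset.card_filter_add_card_filter_not]; simp
  have hT : T.card ≤ F.card := by
    apply Finset.card_le_card_of_injOn
      (fun j => if h : ∃ t : Fin B, bitIndex j t ∈ F then bitIndex j h.choose
                else bitIndex j ⟨0, hB⟩)
    · intro j hj
      simp only [hTdef, Finset.mem_coe, Finset.mem_filter, Finset.mem_univ, true_and] at hj
      push_neg at hj
      simp only [dif_pos hj]
      exact hj.choose_spec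
    · intro j hj j' hj' heq
      simp only [hTdef, Finset.mem_coe, Finset.mem_filter, Finset.mem_univ, true_and] at hj hj'
      push_neg at hj hj'
      simp only [dif_pos hj, dif_pos hj'] at heq
      have hv : j.val * B + (hj.choose).val = j'.val * B + (hj'.choose).val :=
        congrArg Fin.val heq
      have ht1 : (hj.choose).val < B := (hj.choose).isLt
      have ht2 : (hj'.choose).val < B := (hj'.choose).isLt
      have : j.val = j'.val := by
        have e1 : ((hj.choose).val + j.val * B) / B = j.val := by
          rw [Nat.add_mul_div_right _ _ (by omega : 0 < B), Nat.div_eq_of_lt ht1]; omega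
        have e2 : ((hj'.choose).val + j'.val * B) / B = j'.val := by
          rw [Nat.add_mul_div_right _ _ (by omega : 0 < B), Nat.div_eq_of_lt ht2]; omega
        rw [← e1, ← e2]
        congr 1
        omega
      exact Fin.ext this
  omega
end

section
/- Let p be a prime, n ≥ 1 with n not divisible by p, and ω ∈ ZMod p a primitive n-th root of unity. For a : Fin n → ZMod p define NTT(a)_k = Σ_{j=0}^{n−1} a_j ω^{jk} and INTT(A)_j = n^{−1} Σ_{k=0}^{n−1} A_k ω^{−jk}. Let ξ_0,…,ξ_{N−1}, η_0,…,η_{N−1} ∈ {0,1} with 2N ≤ n and N < p, set X = Σ_i ξ_i 2^i and Y = Σ_i η_i 2^i, and let a, b : Fin n → ZMod p be ξ and η (cast to ZMod p) padded with zeros. Let c = INTT of the pointwise product (NTT(a)_k · NTT(b)_k)_k. Then for every j, the canonical representative c̃_j ∈ {0,…,p−1} of c_j equals Σ_{i + i' = j, 0 ≤ i,i' < N} ξ_i η_{i'}, and Σ_{j=0}^{n−1} c̃_j · 2^j = X·Y. -/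
lemma geom_aux (p n : ℕ) [Fact p.Prime] (ω : ZMod p) (hω : ω ^ n = 1)
    (hord : orderOf ω = n) (hn : 1 ≤ n) (m j : ℕ) (hm : m < n) (hj : j < n) :
    ∑ k ∈ Finset.range n, (ω ^ m * ω⁻¹ ^ j) ^ k = if m = j then (n : ZMod p) else 0 := by
  have hω0 : ω ≠ 0 := by
    intro h
    rw [h, zero_pow (by omega : n ≠ 0)] at hω
    exact one_ne_zero hω.symm
  by_cases hmj : m = j
  · subst hmj
    have hx : ω ^ m * ω⁻¹ ^ m = 1 := by
      rw [inv_pow, mul_inv_cancel₀ (pow_ne_zero _ hω0)]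
    rw [Finset.sum_congr rfl (fun k _ => by rw [hx, one_pow])]
    simp
  · have hx1 : ω ^ m * ω⁻¹ ^ j ≠ 1 := by
      intro h
      have hωj : (ω : ZMod p) ^ j ≠ 0 := pow_ne_zero _ hω0
      have h2 : ω ^ m = ω ^ j := by
        have := congrArg (· * ω ^ j) h
        simpa [inv_pow, mul_assoc, inv_mul_cancel₀ hωj] using this
      have h3 : ω ^ (m + (n - j)) = 1 := by
        rw [pow_add, h2, ← pow_add, show j + (n - j) = n by omega, hω]
      have h4 : n ∣ m + (n - j) := by
        have := orderOf_dvd_of_pow_eq_one h3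
        rwa [hord] at this
      obtain ⟨t, ht⟩ := h4
      rcases t with _ | _ | t
      · omega
      · omega
      · have h5 : n * 2 ≤ n * (t + 2) := Nat.mul_le_mul_left n (by omega)
        have h6 : n * (t + 1 + 1) = n * (t + 2) := by ring
        omega
    have hxn : (ω ^ m * ω⁻¹ ^ j) ^ n = 1 := by
      rw [mul_pow, ← pow_mul, ← pow_mul, mul_comm m n, mul_comm j n, pow_mul, pow_mul,
        inv_pow, hω]
      simp
    rw [geom_sum_eq hx1, hxn]
    simp [hmj]

/-- **Correctness of NTT-based multiplication.** Let `p` be prime, `n ≥ 1`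
not divisible by `p`, and `ω` a primitive `n`-th root of unity in `ZMod p`. Given the bit
vectors `ξ`, `η` of two `N`-bit integers with `2N ≤ n` and `N < p`, padded to vectors
`a`, `b` of length `n`, the inverse NTT of the pointwise product of their NTTs is the
convolution `c`, with `c̃_j = Σ_{i+i'=j} ξ_i η_{i'}` and `Σ_j c̃_j 2^j = X·Y`. -/
theorem ntt_multiplication_correct
    (p n : ℕ) [Fact p.Prime] (hn : 1 ≤ n) (hpn : ¬ p ∣ n)
    (ω : ZMod p) (hω : ω ^ n = 1) (hprim : ∀ k : ℕ, 1 ≤ k → k < n → ω ^ k ≠ 1)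
    (N : ℕ) (ξ η : Fin N → Bool) (h2N : 2 * N ≤ n) (hNp : N < p)
    (a b : Fin n → ZMod p)
    (ha : ∀ j : Fin n, a j = if h : j.val < N then (if ξ ⟨j.val, h⟩ then 1 else 0) else 0)
    (hb : ∀ j : Fin n, b j = if h : j.val < N then (if η ⟨j.val, h⟩ then 1 else 0) else 0)
    (NTT INTT : (Fin n → ZMod p) → Fin n → ZMod p)
    (hNTT : ∀ (v : Fin n → ZMod p) (k : Fin n),
      NTT v k = ∑ j : Fin n, v j * ω ^ (j.val * k.val))
    (hINTT : ∀ (A : Fin n → ZMod p) (j : Fin n),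
      INTT A j = (n : ZMod p)⁻¹ * ∑ k : Fin n, A k * ω⁻¹ ^ (j.val * k.val))
    (c : Fin n → ZMod p)
    (hc : ∀ j : Fin n, c j = INTT (fun k => NTT a k * NTT b k) j) :
    (∀ j : Fin n, (c j).val =
      ∑ i : Fin N, ∑ i' : Fin N,
        if i.val + i'.val = j.val ∧ ξ i = true ∧ η i' = true then 1 else 0) ∧
    (∑ j : Fin n, (c j).val * 2 ^ j.val) =
      (∑ i : Fin N, if ξ i then 2 ^ i.val else 0) *
        (∑ i : Fin N, if η i then 2 ^ i.val else 0) := by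
  have hp : p.Prime := Fact.out
  have hnz : (n : ZMod p) ≠ 0 := by
    rw [Ne, ZMod.natCast_eq_zero_iff]
    exact hpn
  have hω0 : ω ≠ 0 := by
    intro h
    rw [h, zero_pow (by omega : n ≠ 0)] at hω
    exact one_ne_zero hω.symm
  have hord : orderOf ω = n := by
    have hd : orderOf ω ∣ n := orderOf_dvd_of_pow_eq_one hω
    have h0 : orderOf ω ≠ 0 := by
      intro h
      rw [h] at hd
      omega
    rcases Nat.lt_or_ge (orderOf ω) n with h | h
    · exact absurd (pow_orderOf_eq_one ω) (hprim _ (by omega) h)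
    · exact le_antisymm (Nat.le_of_dvd (by omega) hd) h
  -- bit functions on ℕ
  set ξ' : ℕ → Bool := fun i => if h : i < N then ξ ⟨i, h⟩ else false with hξ'def
  set η' : ℕ → Bool := fun i => if h : i < N then η ⟨i, h⟩ else false with hη'def
  have hξ' : ∀ i : Fin N, ξ' i.val = ξ i := by
    intro i
    simp [hξ'def, i.isLt]
  have hη' : ∀ i : Fin N, η' i.val = η i := by
    intro i
    simp [hη'def, i.isLt]
  have ha' : ∀ i : Fin n, a i = if ξ' i.val then 1 else 0 := by
    intro i
    rw [ha]
    by_cases h : i.val < N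
    · simp [hξ'def, h]
    · simp [hξ'def, h]
  have hb' : ∀ i : Fin n, b i = if η' i.val then 1 else 0 := by
    intro i
    rw [hb]
    by_cases h : i.val < N
    · simp [hη'def, h]
    · simp [hη'def, h]
  -- Step B : convolution formula
  have hconv : ∀ j : Fin n, c j =
      ∑ i : Fin n, ∑ i' : Fin n,
        if i.val + i'.val = j.val then a i * b i' else 0 := by
    intro j
    rw [hc, hINTT]
    have key : ∀ k : Fin n,
        NTT a k * NTT b k * ω⁻¹ ^ (j.val * k.val) =
        ∑ i : Fin n, ∑ i' : Fin n,
          a i * b i' * (ω ^ (i.val + i'.val) * ω⁻¹ ^ j.val) ^ k.val := by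
      intro k
      rw [hNTT, hNTT, Finset.sum_mul_sum, Finset.sum_mul]
      refine Finset.sum_congr rfl fun i _ => ?_
      rw [Finset.sum_mul]
      refine Finset.sum_congr rfl fun i' _ => ?_
      have hpow : (ω ^ (i.val + i'.val) * ω⁻¹ ^ j.val) ^ k.val =
          ω ^ (i.val * k.val) * ω ^ (i'.val * k.val) * ω⁻¹ ^ (j.val * k.val) := by
        rw [mul_pow, ← pow_mul, ← pow_mul, add_mul, pow_add]
      rw [hpow]
      ring
    rw [Finset.sum_congr rfl fun k _ => key k]
    rw [Finset.sum_comm]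
    rw [Finset.sum_congr rfl fun i (_ : i ∈ Finset.univ) => Finset.sum_comm]
    have inner : ∀ i i' : Fin n,
        (∑ k : Fin n, a i * b i' * (ω ^ (i.val + i'.val) * ω⁻¹ ^ j.val) ^ k.val) =
        (if i.val + i'.val = j.val then a i * b i' else 0) * n := by
      intro i i'
      rw [← Finset.mul_sum]
      by_cases hz : a i * b i' = 0
      · rw [hz]
        simp
      · have hiN : i.val < N := by
          by_contra h
          rw [ha' i, if_neg] at hz
          · simp at hz
          · simp [hξ'def, h]
        have hi'N : i'.val < N := by
          by_contra h
          rw [hb' i', if_neg] at hz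
          · simp at hz
          · simp [hη'def, h]
        have hlt : i.val + i'.val < n := by omega
        rw [Fin.sum_univ_eq_sum_range (fun k => (ω ^ (i.val + i'.val) * ω⁻¹ ^ j.val) ^ k) n]
        rw [geom_aux p n ω hω hord hn _ _ hlt j.isLt]
        split_ifs <;> ring
    rw [Finset.sum_congr rfl fun i _ => Finset.sum_congr rfl fun i' _ => inner i i']
    have hfold : ∀ i : Fin n,
        (∑ i' : Fin n, (if i.val + i'.val = j.val then a i * b i' else 0) * (n : ZMod p)) =
        (∑ i' : Fin n, if i.val + i'.val = j.val then a i * b i' else 0) * (n : ZMod p) :=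
      fun i => (Finset.sum_mul _ _ _).symm
    rw [Finset.sum_congr rfl fun i _ => hfold i, ← Finset.sum_mul, mul_comm, mul_assoc,
      mul_inv_cancel₀ hnz, mul_one]
  -- Step C : value formula over ranges
  have hval : ∀ j : Fin n, (c j).val =
      ∑ i ∈ Finset.range N, ∑ i' ∈ Finset.range N,
        if i + i' = j.val ∧ ξ' i = true ∧ η' i' = true then 1 else 0 := by
    intro j
    have hcast : c j = ((∑ i ∈ Finset.range N, ∑ i' ∈ Finset.range N,
        if i + i' = j.val ∧ ξ' i = true ∧ η' i' = true then 1 else 0 : ℕ) : ZMod p) := by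
      rw [hconv j]
      push_cast
      have step1 : ∀ i i' : Fin n,
          (if i.val + i'.val = j.val then a i * b i' else 0) =
          (if i.val + i'.val = j.val ∧ ξ' i.val = true ∧ η' i'.val = true then (1 : ZMod p)
            else 0) := by
        intro i i'
        rw [ha' i, hb' i']
        by_cases h1 : i.val + i'.val = j.val
        · by_cases h2 : ξ' i.val = true
          · by_cases h3 : η' i'.val = true
            · rw [if_pos h1, if_pos h2, if_pos h3, if_pos ⟨h1, h2, h3⟩, one_mul]
            · rw [if_pos h1, if_neg h3, mul_zero, if_neg (fun h => h3 h.2.2)]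
          · rw [if_pos h1, if_neg h2, zero_mul, if_neg (fun h => h2 h.2.1)]
        · rw [if_neg h1, if_neg (fun h => h1 h.1)]
      rw [Finset.sum_congr rfl fun i _ => Finset.sum_congr rfl fun i' _ => step1 i i']
      rw [Fin.sum_univ_eq_sum_range (fun i => ∑ i' : Fin n,
        if i + i'.val = j.val ∧ ξ' i = true ∧ η' i'.val = true then (1 : ZMod p) else 0) n]
      rw [Finset.sum_congr rfl fun i _ =>
        Fin.sum_univ_eq_sum_range (fun i' =>
          if i + i' = j.val ∧ ξ' i = true ∧ η' i' = true then (1 : ZMod p) else 0) n]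
      rw [Finset.sum_subset (Finset.range_subset_range.2 (by omega : N ≤ n))]
      · refine Finset.sum_congr rfl fun i _ => ?_
        rw [Finset.sum_subset (Finset.range_subset_range.2 (by omega : N ≤ n))]
        intro i' _ hi'
        rw [Finset.mem_range, not_lt] at hi'
        rw [if_neg]
        rintro ⟨-, -, h3⟩
        simp [hη'def, Nat.not_lt.2 hi'] at h3
      · intro i _ hi
        rw [Finset.mem_range, not_lt] at hi
        refine Finset.sum_eq_zero fun i' _ => ?_
        rw [if_neg]
        rintro ⟨-, h2, -⟩
        simp [hξ'def, Nat.not_lt.2 hi] at h2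
    have hbound : (∑ i ∈ Finset.range N, ∑ i' ∈ Finset.range N,
        if i + i' = j.val ∧ ξ' i = true ∧ η' i' = true then 1 else 0) < p := by
      calc (∑ i ∈ Finset.range N, ∑ i' ∈ Finset.range N,
            if i + i' = j.val ∧ ξ' i = true ∧ η' i' = true then 1 else 0)
          ≤ ∑ i ∈ Finset.range N, 1 := by
            refine Finset.sum_le_sum fun i _ => ?_
            calc (∑ i' ∈ Finset.range N,
                  if i + i' = j.val ∧ ξ' i = true ∧ η' i' = true then 1 else 0)
                ≤ ∑ i' ∈ Finset.range N, if i' = j.val - i then 1 else 0 := by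
                  refine Finset.sum_le_sum fun i' _ => ?_
                  by_cases h1 : i + i' = j.val ∧ ξ' i = true ∧ η' i' = true
                  · have h2 : i' = j.val - i := by have := h1.1; omega
                    rw [if_pos h1, if_pos h2]
                  · rw [if_neg h1]
                    exact Nat.zero_le _
              _ ≤ 1 := by
                  rw [Finset.sum_ite_eq' (Finset.range N) (j.val - i) (fun _ => 1)]
                  split_ifs <;> omega
        _ = N := by simp
        _ < p := hNp
    rw [hcast, ZMod.val_natCast_of_lt hbound]
  constructor
  · intro j
    rw [hval j]
    rw [← Fin.sum_univ_eq_sum_range (fun i => ∑ i' ∈ Finset.range N,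
      if i + i' = j.val ∧ ξ' i = true ∧ η' i' = true then 1 else 0) N]
    refine Finset.sum_congr rfl fun i _ => ?_
    rw [← Fin.sum_univ_eq_sum_range (fun i' =>
      if i.val + i' = j.val ∧ ξ' i.val = true ∧ η' i' = true then 1 else 0) N]
    refine Finset.sum_congr rfl fun i' _ => ?_
    rw [hξ' i, hη' i']
  · -- Part 2
    have hL : ∑ j : Fin n, (c j).val * 2 ^ j.val =
        ∑ j ∈ Finset.range n, (∑ i ∈ Finset.range N, ∑ i' ∈ Finset.range N,
          if i + i' = j ∧ ξ' i = true ∧ η' i' = true then 1 else 0) * 2 ^ j := by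
      rw [← Fin.sum_univ_eq_sum_range (fun j => (∑ i ∈ Finset.range N, ∑ i' ∈ Finset.range N,
        if i + i' = j ∧ ξ' i = true ∧ η' i' = true then 1 else 0) * 2 ^ j) n]
      exact Finset.sum_congr rfl fun j _ => by rw [hval j]
    rw [hL]
    have hswap : ∑ j ∈ Finset.range n, (∑ i ∈ Finset.range N, ∑ i' ∈ Finset.range N,
          if i + i' = j ∧ ξ' i = true ∧ η' i' = true then 1 else 0) * 2 ^ j =
        ∑ i ∈ Finset.range N, ∑ i' ∈ Finset.range N,
          (if ξ' i = true ∧ η' i' = true then 2 ^ (i + i') else 0) := by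
      have hpush : ∀ j : ℕ, (∑ i ∈ Finset.range N, ∑ i' ∈ Finset.range N,
          if i + i' = j ∧ ξ' i = true ∧ η' i' = true then 1 else 0) * 2 ^ j =
          ∑ i ∈ Finset.range N, ∑ i' ∈ Finset.range N,
            (if i + i' = j ∧ ξ' i = true ∧ η' i' = true then 1 else 0) * 2 ^ j := by
        intro j
        rw [Finset.sum_mul]
        exact Finset.sum_congr rfl fun i _ => Finset.sum_mul _ _ _
      rw [Finset.sum_congr rfl fun j _ => hpush j]
      rw [Finset.sum_comm]
      refine Finset.sum_congr rfl fun i hi => ?_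
      rw [Finset.sum_comm]
      refine Finset.sum_congr rfl fun i' hi' => ?_
      rw [Finset.mem_range] at hi hi'
      have hmem : i + i' ∈ Finset.range n := by
        rw [Finset.mem_range]
        omega
      have hstep : ∀ j ∈ Finset.range n,
          (if i + i' = j ∧ ξ' i = true ∧ η' i' = true then 1 else 0) * 2 ^ j =
          (if j = i + i' then (if ξ' i = true ∧ η' i' = true then 2 ^ j else 0) else 0) := by
        intro j _
        by_cases hq : ξ' i = true ∧ η' i' = true
        · by_cases hj : i + i' = j
          · rw [if_pos ⟨hj, hq.1, hq.2⟩, if_pos hj.symm, if_pos hq, one_mul]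
          · rw [if_neg (fun h => hj h.1), if_neg (fun h => hj h.symm), zero_mul]
        · rw [if_neg (fun h => hq ⟨h.2.1, h.2.2⟩), zero_mul]
          by_cases hj : j = i + i'
          · rw [if_pos hj, if_neg hq]
          · rw [if_neg hj]
      rw [Finset.sum_congr rfl hstep, Finset.sum_ite_eq' (Finset.range n) (i + i')
        (fun j => if ξ' i = true ∧ η' i' = true then 2 ^ j else 0), if_pos hmem]
    rw [hswap]
    have hR : (∑ i : Fin N, if ξ i then 2 ^ i.val else 0) *
        (∑ i : Fin N, if η i then 2 ^ i.val else 0) =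
        ∑ i ∈ Finset.range N, ∑ i' ∈ Finset.range N,
          (if ξ' i = true ∧ η' i' = true then 2 ^ (i + i') else 0) := by
      have h1 : (∑ i : Fin N, if ξ i then 2 ^ i.val else 0) =
          ∑ i ∈ Finset.range N, (if ξ' i = true then 2 ^ i else 0) := by
        rw [← Fin.sum_univ_eq_sum_range (fun i => if ξ' i = true then 2 ^ i else 0) N]
        exact Finset.sum_congr rfl fun i _ => by rw [hξ' i]
      have h2 : (∑ i : Fin N, if η i then 2 ^ i.val else 0) =
          ∑ i ∈ Finset.range N, (if η' i = true then 2 ^ i else 0) := by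
        rw [← Fin.sum_univ_eq_sum_range (fun i => if η' i = true then 2 ^ i else 0) N]
        exact Finset.sum_congr rfl fun i _ => by rw [hη' i]
      rw [h1, h2, Finset.sum_mul_sum]
      refine Finset.sum_congr rfl fun i _ => Finset.sum_congr rfl fun i' _ => ?_
      by_cases h2 : ξ' i = true
      · by_cases h3 : η' i' = true
        · rw [if_pos h2, if_pos h3, if_pos ⟨h2, h3⟩, pow_add]
        · rw [if_neg h3, mul_zero, if_neg (fun h => h3 h.2)]
      · rw [if_neg h2, zero_mul, if_neg (fun h => h2 h.1)]
    rw [hR]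
end
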